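/- Up to isomorphism, there are exactly six groups generated by invertible automata with 2 states over X = {0,1}: the trivial group, the cyclic group C₂ of order 2, the Klein group C₂ × C₂, the infinite cyclic group ℤ, the infinite dihedral group D_∞, and the lamplighter group ℤ ≀ C₂. Precisely: every G(A) with A a 2-state invertible automaton over X is isomorphic to one of these six groups, and each of the six occurs; for example the adding machine recursion a = σ(b,a), b = (b,a) generates ℤ (here b is the identity and a is the binary adding machine), the recursion a = σ(a,a), b = (a,b) generates D_∞, and the recursion a = σ(a,b), b = (a,b) generates the lamplighter group. -/

import Mathlib

/-- An invertible automaton over the two-letter alphabet `X = Bool` with set of states `S`: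
`out s` is the output permutation `π(s,·) : X ≃ X` of the state `s`, and `tr s x` is the
state `τ(s,x)` reached from `s` after reading the letter `x`. -/
structure BinAutomaton (S : Type*) where
  out : S → Equiv.Perm Bool
  tr : S → Bool → S

namespace BinAutomaton

variable {S : Type*}

/-- The action of the state `s` of the automaton `A` on finite binary words,
given by `s(xw) = π(s,x) · (τ(s,x))(w)`. -/
def act (A : BinAutomaton S) : S → List Bool → List Bool
  | _, [] => []
  | s, x :: w => A.out s x :: A.act (A.tr s x) w

@[simp] theorem act_nil (A : BinAutomaton S) (s : S) : A.act s [] = [] := rfl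

@[simp] theorem act_cons (A : BinAutomaton S) (s : S) (x : Bool) (w : List Bool) :
    A.act s (x :: w) = A.out s x :: A.act (A.tr s x) w := rfl

/-- The inverse automaton of `A`. -/
def invAut (A : BinAutomaton S) : BinAutomaton S where
  out s := (A.out s).symm
  tr s x := A.tr s ((A.out s).symm x)

@[simp] theorem invAut_out (A : BinAutomaton S) (s : S) :
    A.invAut.out s = (A.out s).symm := rfl

@[simp] theorem invAut_tr (A : BinAutomaton S) (s : S) (x : Bool) :
    A.invAut.tr s x = A.tr s ((A.out s).symm x) := rfl

theorem invAut_act_act (A : BinAutomaton S) (w : List Bool) :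
    ∀ s : S, A.invAut.act s (A.act s w) = w := by
  induction w with
  | nil => exact fun s => rfl
  | cons x w ih =>
    intro s
    simp only [act_cons, invAut_out, invAut_tr, Equiv.symm_apply_apply]
    rw [ih]

theorem act_invAut_act (A : BinAutomaton S) (w : List Bool) :
    ∀ s : S, A.act s (A.invAut.act s w) = w := by
  induction w with
  | nil => exact fun s => rfl
  | cons x w ih =>
    intro s
    simp only [act_cons, invAut_out, invAut_tr, Equiv.apply_symm_apply]
    rw [ih]

/-- The tree automorphism of `X* = List Bool` defined by the state `s` of the automaton `A`. -/
def toPerm (A : BinAutomaton S) (s : S) : Equiv.Perm (List Bool) where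
  toFun := A.act s
  invFun := A.invAut.act s
  left_inv w := A.invAut_act_act w s
  right_inv w := A.act_invAut_act w s

/-- The automaton group `G(A)`: the subgroup of the group of permutations of
`X* = List Bool` generated by the tree automorphisms defined by the states of `A`. -/
def autGroup (A : BinAutomaton S) : Subgroup (Equiv.Perm (List Bool)) :=
  Subgroup.closure (Set.range A.toPerm)

end BinAutomaton

/-- The nontrivial permutation (the transposition `σ`) of the two-letter alphabet `Bool`. -/
def flipPerm : Equiv.Perm Bool := ⟨Bool.not, Bool.not, Bool.not_not, Bool.not_not⟩

/-- The translation `a ↦ a + n` of `ℤ`. -/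
def shiftE (n : ℤ) : ℤ ≃ ℤ where
  toFun a := a + n
  invFun a := a - n
  left_inv a := by show a + n - n = a; omega
  right_inv a := by show a - n + n = a; omega

/-- The shift by `n` of a finitely supported function `ℤ →₀ ZMod 2`
(an element of `⊕_{i ∈ ℤ} ℤ/2ℤ`). -/
def shiftF (n : ℤ) (f : ℤ →₀ ZMod 2) : ℤ →₀ ZMod 2 :=
  Finsupp.equivMapDomain (shiftE n) f

theorem shiftF_apply (n : ℤ) (f : ℤ →₀ ZMod 2) (a : ℤ) : shiftF n f a = f (a - n) := rfl

theorem shiftF_add (n : ℤ) (f g : ℤ →₀ ZMod 2) :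
    shiftF n (f + g) = shiftF n f + shiftF n g := by
  ext a
  simp [shiftF_apply]

theorem shiftF_shiftF (m n : ℤ) (f : ℤ →₀ ZMod 2) :
    shiftF m (shiftF n f) = shiftF (m + n) f := by
  ext a
  rw [shiftF_apply, shiftF_apply, shiftF_apply]
  congr 1
  omega

theorem shiftF_zero (f : ℤ →₀ ZMod 2) : shiftF 0 f = f := by
  ext a
  rw [shiftF_apply, sub_zero]

theorem shiftF_zero_fun (n : ℤ) : shiftF n 0 = 0 := by
  ext a
  rw [shiftF_apply]
  rfl

/-- The lamplighter group `ℤ ≀ C₂`, i.e. the restricted wreath product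
`(⊕_{i ∈ ℤ} ℤ/2ℤ) ⋊ ℤ` where `ℤ` acts by shifting the coordinates.  It is realized
concretely as the set of pairs `(f, m)` with `f : ℤ →₀ ZMod 2` a finitely supported
function (an element of `⊕_{i ∈ ℤ} ℤ/2ℤ`) and `m : ℤ`, with the semidirect product
multiplication `(f, m) · (g, n) = (f + shift_m g, m + n)`. -/
structure Lamplighter where
  lamps : ℤ →₀ ZMod 2
  pos : ℤ

namespace Lamplighter

noncomputable instance : Mul Lamplighter :=
  ⟨fun x y => ⟨x.lamps + shiftF x.pos y.lamps, x.pos + y.pos⟩⟩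
instance : One Lamplighter := ⟨⟨0, 0⟩⟩
noncomputable instance : Inv Lamplighter :=
  ⟨fun x => ⟨shiftF (-x.pos) (-x.lamps), -x.pos⟩⟩

@[simp] theorem mul_lamps (x y : Lamplighter) :
    (x * y).lamps = x.lamps + shiftF x.pos y.lamps := rfl
@[simp] theorem mul_pos (x y : Lamplighter) : (x * y).pos = x.pos + y.pos := rfl
@[simp] theorem one_lamps : (1 : Lamplighter).lamps = 0 := rfl
@[simp] theorem one_pos : (1 : Lamplighter).pos = 0 := rfl
@[simp] theorem inv_lamps (x : Lamplighter) : x⁻¹.lamps = shiftF (-x.pos) (-x.lamps) := rfl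
@[simp] theorem inv_pos (x : Lamplighter) : x⁻¹.pos = -x.pos := rfl

@[ext] theorem ext {x y : Lamplighter} (h₁ : x.lamps = y.lamps) (h₂ : x.pos = y.pos) :
    x = y := by
  cases x; cases y; cases h₁; cases h₂; rfl

noncomputable instance : Group Lamplighter where
  mul := (· * ·)
  one := 1
  inv := (·⁻¹)
  mul_assoc x y z := by
    ext
    · simp [shiftF_add, shiftF_shiftF, add_assoc]
    · simp [add_assoc]
  one_mul x := by
    ext
    · simp [shiftF_zero]
    · simp
  mul_one x := by
    ext
    · simp [shiftF_zero_fun]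
    · simp
  inv_mul_cancel x := by
    ext
    · rw [mul_lamps, inv_lamps, inv_pos, ← shiftF_add, neg_add_cancel, shiftF_zero_fun,
        one_lamps]
    · rw [mul_pos, inv_pos, neg_add_cancel, one_pos]

end Lamplighter

/-- The adding machine automaton `a = σ(b,a)`, `b = (b,b)`: here `b` is the identity and
`a` is the binary adding machine; it generates `ℤ`. -/
def autAdding : BinAutomaton (Fin 2) :=
  ⟨![flipPerm, 1], ![fun x => if x then 0 else 1, fun _ => 1]⟩

/-- The automaton `a = σ(a,a)`, `b = (a,b)`; it generates the infinite dihedral group. -/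
def autDInf : BinAutomaton (Fin 2) :=
  ⟨![flipPerm, 1], ![fun _ => 0, fun x => if x then 1 else 0]⟩

/-- The automaton `a = σ(a,b)`, `b = (a,b)`; it generates the lamplighter group. -/
def autLamp : BinAutomaton (Fin 2) :=
  ⟨![flipPerm, 1], ![fun x => if x then 1 else 0, fun x => if x then 1 else 0]⟩

section Basics

open Subgroup Equiv

abbrev TreePerm := Equiv.Perm (List Bool)

namespace BinAutomaton

theorem toPerm_apply {S : Type*} (A : BinAutomaton S) (s : S) (w : List Bool) :
    A.toPerm s w = A.act s w := rfl

/-- Uniqueness of solutions of automaton recursions. -/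
theorem act_unique {S : Type*} (A : BinAutomaton S) (f : S → List Bool → List Bool)
    (h0 : ∀ s, f s [] = []) (h : ∀ s x w, f s (x :: w) = A.out s x :: f (A.tr s x) w) :
    ∀ (w : List Bool) (s : S), f s w = A.act s w := by
  intro w
  induction w with
  | nil => intro s; rw [h0]; rfl
  | cons x w ih => intro s; rw [h, act_cons, ih]

end BinAutomaton

/-- A family of maps with trivial root permutations closed under sections is trivial. -/
theorem id_of_rec {ι : Type*} (f : ι → List Bool → List Bool) (j : ι → Bool → ι)
    (h0 : ∀ i, f i [] = []) (h : ∀ i x w, f i (x :: w) = x :: f (j i x) w) :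
    ∀ (w : List Bool) (i : ι), f i w = w := by
  intro w
  induction w with
  | nil => exact h0
  | cons x w ih => intro i; rw [h, ih]

/-- A family of maps with root permutation `σ` closed under sections is the all-flip map. -/
theorem not_of_rec {ι : Type*} (f : ι → List Bool → List Bool) (j : ι → Bool → ι)
    (h0 : ∀ i, f i [] = []) (h : ∀ i x w, f i (x :: w) = (!x) :: f (j i x) w) :
    ∀ (w : List Bool) (i : ι), f i w = w.map not := by
  intro w
  induction w with
  | nil => exact h0
  | cons x w ih => intro i; rw [h, ih]; rfl

/-- Relabelling states of an automaton. -/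
def BinAutomaton.relabel {S T : Type*} (A : BinAutomaton S) (e : S ≃ T) : BinAutomaton T :=
  ⟨fun t => A.out (e.symm t), fun t x => e (A.tr (e.symm t) x)⟩

theorem BinAutomaton.relabel_out {S T : Type*} (A : BinAutomaton S) (e : S ≃ T) (t : T) :
    (A.relabel e).out t = A.out (e.symm t) := rfl

theorem BinAutomaton.relabel_tr {S T : Type*} (A : BinAutomaton S) (e : S ≃ T) (t : T)
    (x : Bool) : (A.relabel e).tr t x = e (A.tr (e.symm t) x) := rfl

theorem BinAutomaton.act_relabel {S T : Type*} (A : BinAutomaton S) (e : S ≃ T) :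
    ∀ (w : List Bool) (s : S), (A.relabel e).act (e s) w = A.act s w := by
  intro w
  induction w with
  | nil => intro s; rfl
  | cons x w ih =>
    intro s
    rw [BinAutomaton.act_cons, BinAutomaton.relabel_out, BinAutomaton.relabel_tr,
      Equiv.symm_apply_apply, ih]
    rfl

theorem BinAutomaton.toPerm_relabel {S T : Type*} (A : BinAutomaton S) (e : S ≃ T) (s : S) :
    (A.relabel e).toPerm (e s) = A.toPerm s :=
  Equiv.ext fun w => A.act_relabel e w s

theorem BinAutomaton.autGroup_relabel {S T : Type*} (A : BinAutomaton S) (e : S ≃ T) :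
    (A.relabel e).autGroup = A.autGroup := by
  unfold BinAutomaton.autGroup
  congr 1
  ext x
  constructor
  · rintro ⟨t, rfl⟩
    exact ⟨e.symm t, by rw [← A.toPerm_relabel e (e.symm t), e.apply_symm_apply]⟩
  · rintro ⟨s, rfl⟩
    exact ⟨e s, A.toPerm_relabel e s⟩

theorem BinAutomaton.toPerm_invAut {S : Type*} (A : BinAutomaton S) (s : S) :
    A.invAut.toPerm s = (A.toPerm s)⁻¹ :=
  Equiv.ext fun _ => rfl

theorem BinAutomaton.autGroup_invAut {S : Type*} (A : BinAutomaton S) :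
    A.invAut.autGroup = A.autGroup := by
  unfold BinAutomaton.autGroup
  apply le_antisymm <;> rw [Subgroup.closure_le] <;> rintro x ⟨s, rfl⟩
  · rw [BinAutomaton.toPerm_invAut]
    exact inv_mem (Subgroup.subset_closure ⟨s, rfl⟩)
  · have : A.toPerm s = (A.invAut.toPerm s)⁻¹ := by rw [BinAutomaton.toPerm_invAut, inv_inv]
    rw [this]
    exact inv_mem (Subgroup.subset_closure ⟨s, rfl⟩)

/-- The automorphism flipping every letter. -/
def flipAll : TreePerm :=
  ⟨fun w => w.map not, fun w => w.map not,
    fun w => by induction w with | nil => rfl | cons x w ih => simp [ih],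
    fun w => by induction w with | nil => rfl | cons x w ih => simp [ih]⟩

theorem flipAll_apply (w : List Bool) : flipAll w = w.map not := rfl

theorem flipAll_inv : flipAll⁻¹ = flipAll := Equiv.ext fun _ => rfl

theorem flipAll_ne_one : flipAll ≠ 1 := by
  intro h
  have := congrArg (fun π : TreePerm => π [false]) h
  simp [flipAll_apply] at this

/-- Conjugating an automaton by the all-flip automorphism. -/
def BinAutomaton.flipConj {S : Type*} (A : BinAutomaton S) : BinAutomaton S :=
  ⟨A.out, fun s x => A.tr s (!x)⟩

theorem permBool_not (π : Equiv.Perm Bool) (x : Bool) : (!(π (!x))) = π x := by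
  revert π x; decide

theorem BinAutomaton.act_flipConj {S : Type*} (A : BinAutomaton S) :
    ∀ (w : List Bool) (s : S), A.flipConj.act s w = (A.act s (w.map not)).map not := by
  intro w
  induction w with
  | nil => intro s; rfl
  | cons x w ih =>
    intro s
    show A.out s x :: A.flipConj.act (A.tr s (!x)) w = _
    show _ = (A.out s (!x) :: A.act (A.tr s (!x)) (w.map not)).map not
    rw [List.map_cons, ih]
    congr 1
    exact (permBool_not (A.out s) x).symm

theorem BinAutomaton.toPerm_flipConj {S : Type*} (A : BinAutomaton S) (s : S) :
    A.flipConj.toPerm s = flipAll * A.toPerm s * flipAll := by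
  apply Equiv.ext
  intro w
  show A.flipConj.act s w = flipAll ((A.toPerm s) (flipAll w))
  rw [A.act_flipConj w s]
  rfl

theorem BinAutomaton.autGroup_flipConj {S : Type*} (A : BinAutomaton S) :
    A.flipConj.autGroup = A.autGroup.map (MulAut.conj flipAll).toMonoidHom := by
  unfold BinAutomaton.autGroup
  rw [MonoidHom.map_closure]
  congr 1
  ext x
  constructor
  · rintro ⟨s, rfl⟩
    refine ⟨A.toPerm s, ⟨s, rfl⟩, ?_⟩
    simp only [MulEquiv.coe_toMonoidHom, MulAut.conj_apply, flipAll_inv]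
    exact (A.toPerm_flipConj s).symm
  · rintro ⟨y, ⟨s, rfl⟩, rfl⟩
    refine ⟨s, ?_⟩
    simp only [MulEquiv.coe_toMonoidHom, MulAut.conj_apply, flipAll_inv]
    exact A.toPerm_flipConj s

theorem range_toPerm_fin2 (A : BinAutomaton (Fin 2)) :
    Set.range A.toPerm = {A.toPerm 0, A.toPerm 1} := by
  ext x
  constructor
  · rintro ⟨s, rfl⟩
    fin_cases s
    · exact Or.inl rfl
    · exact Or.inr rfl
  · rintro (rfl | rfl)
    · exact ⟨0, rfl⟩
    · exact ⟨1, rfl⟩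

theorem autGroup_pair (A : BinAutomaton (Fin 2)) :
    A.autGroup = Subgroup.closure {A.toPerm 0, A.toPerm 1} := by
  unfold BinAutomaton.autGroup
  rw [range_toPerm_fin2]

/-- Transporting the classification along equality of subgroups. -/
theorem iso_congr {H K : Subgroup TreePerm} {G : Type*} [Group G] (h : H = K)
    (hH : Nonempty (H ≃* G)) : Nonempty (K ≃* G) :=
  hH.elim fun e => ⟨((MulEquiv.subgroupCongr h).symm.trans e)⟩

/-- Transporting along conjugation. -/
theorem iso_flipConj {S : Type*} (A : BinAutomaton S) {G : Type*} [Group G]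
    (h : Nonempty (A.autGroup ≃* G)) : Nonempty (A.flipConj.autGroup ≃* G) := by
  obtain ⟨e⟩ := h
  exact ⟨(MulEquiv.subgroupCongr A.autGroup_flipConj).trans
    (((MulAut.conj flipAll).subgroupMap A.autGroup).symm.trans e)⟩

end Basics
section Models

open Subgroup

variable {G : Type*} [Group G]

/-- A subgroup generated by trivial elements is trivial. -/
theorem iso_unit_of_closure {S : Set G} (h : ∀ x ∈ S, x = 1) :
    Nonempty (Subgroup.closure S ≃* Unit) := by
  have hS : Subgroup.closure S = ⊥ := by
    rw [Subgroup.closure_eq_bot_iff]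
    intro x hx
    exact h x hx
  exact ⟨(MulEquiv.subgroupCongr hS).trans MulEquiv.ofUnique⟩

theorem zpow_eq_one_of_infinite {g : G} (hg : ¬IsOfFinOrder g) {k : ℤ} (h : g ^ k = 1) :
    k = 0 := by
  by_contra hk
  apply hg
  refine isOfFinOrder_iff_pow_eq_one.2 ⟨k.natAbs, by omega, ?_⟩
  rcases Int.natAbs_eq k with he | he
  · rw [← zpow_natCast, ← he, h]
  · rw [← zpow_natCast, ← neg_neg (k.natAbs : ℤ), ← he, zpow_neg, h, inv_one]

/-- A subgroup generated by elements of `⟨g⟩` containing `g`, `g` of infinite order. -/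
theorem iso_int_of_closure {S : Set G} {g : G} (hg : ¬IsOfFinOrder g)
    (hS : ∀ x ∈ S, x ∈ Subgroup.zpowers g) (hgS : g ∈ Subgroup.closure S) :
    Nonempty (Subgroup.closure S ≃* Multiplicative ℤ) := by
  have h1 : Subgroup.closure S = Subgroup.zpowers g := by
    apply le_antisymm ((Subgroup.closure_le _).2 hS)
    rw [Subgroup.zpowers_eq_closure]
    exact (Subgroup.closure_le _).2 (by simpa using hgS)
  set φ : Multiplicative ℤ →* G := zpowersHom G g with hφ
  have hinj : Function.Injective φ := by
    rw [injective_iff_map_eq_one]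
    intro a ha
    have : g ^ (a.toAdd) = 1 := ha
    have := zpow_eq_one_of_infinite hg this
    exact Multiplicative.toAdd.injective this
  have hrange : φ.range = Subgroup.closure S := by
    rw [h1]
    ext x
    simp only [MonoidHom.mem_range, Subgroup.mem_zpowers_iff]
    constructor
    · rintro ⟨n, rfl⟩
      exact ⟨n.toAdd, rfl⟩
    · rintro ⟨k, rfl⟩
      exact ⟨Multiplicative.ofAdd k, rfl⟩
  exact ⟨(MulEquiv.subgroupCongr hrange).symm.trans (MonoidHom.ofInjective hinj).symm⟩

/-- The cyclic group of order 2. -/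
theorem iso_c2_of_closure {S : Set G} {s : G} (h1 : s ∈ S) (h2 : ∀ x ∈ S, x = s ∨ x = 1)
    (hs2 : s * s = 1) (hs : s ≠ 1) :
    Nonempty (Subgroup.closure S ≃* Multiplicative (ZMod 2)) := by
  have hpow : ∀ m : ℕ, s ^ (m % 2) = s ^ m := by
    intro m
    conv_rhs => rw [← Nat.div_add_mod m 2]
    rw [pow_add, pow_mul, pow_two, hs2, one_pow, one_mul]
  have hcl : Subgroup.closure S = Subgroup.zpowers s := by
    apply le_antisymm
    · apply (Subgroup.closure_le _).2
      intro x hx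
      rcases h2 x hx with h | h
      · rw [h]; exact Subgroup.mem_zpowers s
      · rw [h]; exact one_mem _
    · rw [Subgroup.zpowers_eq_closure]
      exact (Subgroup.closure_le _).2 (by simpa using Subgroup.subset_closure h1)
  set φ : Multiplicative (ZMod 2) →* G :=
    { toFun := fun x => s ^ (x.toAdd.val)
      map_one' := by
        show s ^ (0 : ZMod 2).val = 1
        rw [ZMod.val_zero, pow_zero]
      map_mul' := by
        intro x y
        show s ^ ((x.toAdd + y.toAdd).val) = s ^ x.toAdd.val * s ^ y.toAdd.val
        rw [ZMod.val_add, hpow, pow_add] } with hφ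
  have hval : ∀ z : ZMod 2, z.val = 0 ∨ z.val = 1 := by decide
  have hinj : Function.Injective φ := by
    rw [injective_iff_map_eq_one]
    intro a ha
    have ha' : s ^ (a.toAdd.val) = 1 := ha
    rcases hval a.toAdd with h | h
    · have : a.toAdd = 0 := by
        have := (ZMod.val_eq_zero _).1 h
        exact this
      exact Multiplicative.toAdd.injective this
    · rw [h, pow_one] at ha'
      exact absurd ha' hs
  have hrange : φ.range = Subgroup.closure S := by
    rw [hcl]
    apply le_antisymm
    · rintro x ⟨a, rfl⟩
      exact Subgroup.pow_mem _ (Subgroup.mem_zpowers s) _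
    · rw [Subgroup.zpowers_eq_closure]
      apply (Subgroup.closure_le _).2
      intro x hx
      rw [Set.mem_singleton_iff] at hx
      refine ⟨Multiplicative.ofAdd 1, ?_⟩
      rw [hx]
      show s ^ (1 : ZMod 2).val = s
      rw [show (1 : ZMod 2).val = 1 from rfl, pow_one]
  exact ⟨(MulEquiv.subgroupCongr hrange).symm.trans (MonoidHom.ofInjective hinj).symm⟩

/-- The Klein four-group. -/
theorem iso_klein_of_closure {s t : G} (hs2 : s * s = 1) (ht2 : t * t = 1)
    (hcomm : s * t = t * s) (hs : s ≠ 1) (ht : t ≠ 1) (hst : s ≠ t) :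
    Nonempty (Subgroup.closure {s, t} ≃* Multiplicative (ZMod 2 × ZMod 2)) := by
  have hC : Commute s t := hcomm
  have hpows : ∀ m : ℕ, s ^ (m % 2) = s ^ m := by
    intro m
    conv_rhs => rw [← Nat.div_add_mod m 2]
    rw [pow_add, pow_mul, pow_two, hs2, one_pow, one_mul]
  have hpowt : ∀ m : ℕ, t ^ (m % 2) = t ^ m := by
    intro m
    conv_rhs => rw [← Nat.div_add_mod m 2]
    rw [pow_add, pow_mul, pow_two, ht2, one_pow, one_mul]
  set φ : Multiplicative (ZMod 2 × ZMod 2) →* G :=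
    { toFun := fun x => s ^ (x.toAdd.1.val) * t ^ (x.toAdd.2.val)
      map_one' := by
        show s ^ (0 : ZMod 2).val * t ^ (0 : ZMod 2).val = 1
        rw [ZMod.val_zero, pow_zero, pow_zero, one_mul]
      map_mul' := by
        intro x y
        show s ^ ((x.toAdd.1 + y.toAdd.1).val) * t ^ ((x.toAdd.2 + y.toAdd.2).val) = _
        rw [ZMod.val_add, ZMod.val_add, hpows, hpowt, pow_add, pow_add]
        exact (((hC.symm).pow_pow _ _).mul_mul_mul_comm _ _).symm } with hφ
  have hval : ∀ z : ZMod 2, z.val = 0 ∨ z.val = 1 := by decide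
  have hinj : Function.Injective φ := by
    rw [injective_iff_map_eq_one]
    intro a ha
    have ha' : s ^ (a.toAdd.1.val) * t ^ (a.toAdd.2.val) = 1 := ha
    have hz : a.toAdd.1 = 0 ∧ a.toAdd.2 = 0 := by
      rcases hval a.toAdd.1 with h1 | h1 <;> rcases hval a.toAdd.2 with h2 | h2
      · exact ⟨(ZMod.val_eq_zero _).1 h1, (ZMod.val_eq_zero _).1 h2⟩
      · rw [h1, h2, pow_zero, pow_one, one_mul] at ha'
        exact absurd ha' ht
      · rw [h1, h2, pow_zero, pow_one, mul_one] at ha'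
        exact absurd ha' hs
      · rw [h1, h2, pow_one, pow_one] at ha'
        have : t = s⁻¹ := eq_inv_of_mul_eq_one_right ha'
        have hss : s⁻¹ = s := inv_eq_of_mul_eq_one_right hs2
        rw [hss] at this
        exact absurd this.symm hst
    have : a.toAdd = (0, 0) := Prod.ext hz.1 hz.2
    exact Multiplicative.toAdd.injective this
  have hrange : φ.range = Subgroup.closure {s, t} := by
    apply le_antisymm
    · rintro x ⟨a, rfl⟩
      have hsmem : s ∈ Subgroup.closure ({s, t} : Set G) :=
        Subgroup.subset_closure (Set.mem_insert _ _)
      have htmem : t ∈ Subgroup.closure ({s, t} : Set G) :=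
        Subgroup.subset_closure (Set.mem_insert_of_mem _ rfl)
      exact mul_mem (Subgroup.pow_mem _ hsmem _) (Subgroup.pow_mem _ htmem _)
    · apply (Subgroup.closure_le _).2
      rintro x (hx | hx)
      · refine ⟨Multiplicative.ofAdd (1, 0), ?_⟩
        rw [hx]
        show s ^ (1 : ZMod 2).val * t ^ (0 : ZMod 2).val = s
        rw [show (1 : ZMod 2).val = 1 from rfl, show (0 : ZMod 2).val = 0 from rfl,
          pow_one, pow_zero, mul_one]
      · refine ⟨Multiplicative.ofAdd (0, 1), ?_⟩
        rw [hx]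
        show s ^ (0 : ZMod 2).val * t ^ (1 : ZMod 2).val = t
        rw [show (1 : ZMod 2).val = 1 from rfl, show (0 : ZMod 2).val = 0 from rfl,
          pow_one, pow_zero, one_mul]
  exact ⟨(MulEquiv.subgroupCongr hrange).symm.trans (MonoidHom.ofInjective hinj).symm⟩

/-- The infinite dihedral group. -/
theorem iso_dinf_of_closure {s t d : G} (hs2 : s * s = 1) (ht2 : t * t = 1)
    (hd : s * t = d) (hdo : ¬IsOfFinOrder d) (hs : s ≠ 1) :
    Nonempty (Subgroup.closure {s, t} ≃* DihedralGroup 0) := by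
  have hsinv : s⁻¹ = s := inv_eq_of_mul_eq_one_right hs2
  have htinv : t⁻¹ = t := inv_eq_of_mul_eq_one_right ht2
  have hconj : ∀ i : ℤ, s * d ^ i * s = d ^ (-i) := by
    intro i
    have h1 : s * d * s⁻¹ = d⁻¹ := by
      rw [hsinv, ← hd]
      calc s * (s * t) * s = (s * s) * (t * s) := by group
      _ = t * s := by rw [hs2, one_mul]
      _ = (s * t)⁻¹ := by rw [mul_inv_rev, hsinv, htinv]
    have h2 : (MulAut.conj s) (d ^ i) = ((MulAut.conj s) d) ^ i := (map_zpow _ _ _)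
    rw [MulAut.conj_apply, MulAut.conj_apply, h1] at h2
    calc s * d ^ i * s = s * d ^ i * s⁻¹ := by rw [hsinv]
    _ = d⁻¹ ^ i := h2
    _ = d ^ (-i) := by rw [inv_zpow, zpow_neg]
  -- the homomorphism
  let zz : ZMod 0 → ℤ := fun i => i
  have zz_add : ∀ i j : ZMod 0, zz (i + j) = zz i + zz j := fun _ _ => rfl
  have zz_sub : ∀ i j : ZMod 0, zz (i - j) = zz i - zz j := fun _ _ => rfl
  set f : DihedralGroup 0 → G := fun x =>
    match x with
    | DihedralGroup.r i => d ^ (zz i)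
    | DihedralGroup.sr i => s * d ^ (zz i) with hf
  have hmul : ∀ x y : DihedralGroup 0, f (x * y) = f x * f y := by
    rintro (i | i) (j | j)
    · show d ^ (zz (i + j)) = d ^ (zz i) * d ^ (zz j)
      rw [zz_add, zpow_add]
    · show s * d ^ (zz (j - i)) = d ^ (zz i) * (s * d ^ (zz j))
      rw [zz_sub]
      have hmv : d ^ (zz i) * s = s * d ^ (-(zz i)) := by
        rw [← hconj (zz i), ← mul_assoc, ← mul_assoc, hs2, one_mul]
      rw [← mul_assoc, hmv, mul_assoc, ← zpow_add]
      congr 1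
      ring
    · show s * d ^ (zz (i + j)) = (s * d ^ (zz i)) * d ^ (zz j)
      rw [zz_add, zpow_add, mul_assoc]
    · show d ^ (zz (j - i)) = (s * d ^ (zz i)) * (s * d ^ (zz j))
      rw [zz_sub]
      have hmv : d ^ (zz i) * s = s * d ^ (-(zz i)) := by
        rw [← hconj (zz i), ← mul_assoc, ← mul_assoc, hs2, one_mul]
      rw [mul_assoc, ← mul_assoc (d ^ (zz i)), hmv, ← mul_assoc, ← mul_assoc, hs2, one_mul,
        ← zpow_add]
      congr 1
      ring
  set φ : DihedralGroup 0 →* G := MonoidHom.mk' f hmul with hφ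
  have hinj : Function.Injective φ := by
    rw [injective_iff_map_eq_one]
    rintro (i | i) h
    · have h' : d ^ (zz i) = 1 := h
      have h'' := zpow_eq_one_of_infinite hdo h'
      have hi : i = 0 := h''
      rw [hi]
      rfl
    · exfalso
      have h1 : s * d ^ (zz i) = 1 := h
      have h2 : s = d ^ (-(zz i)) := by
        rw [zpow_neg]
        exact eq_inv_of_mul_eq_one_left h1
      have h3 : d ^ (-(zz i) + -(zz i)) = 1 := by
        rw [zpow_add, ← h2, hs2]
      have h4 := zpow_eq_one_of_infinite hdo h3
      have hi : (zz i) = 0 := by omega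
      rw [h2, hi, neg_zero, zpow_zero] at hs
      exact hs rfl
  have hrange : φ.range = Subgroup.closure {s, t} := by
    have hsmem : s ∈ Subgroup.closure ({s, t} : Set G) :=
      Subgroup.subset_closure (Set.mem_insert _ _)
    have htmem : t ∈ Subgroup.closure ({s, t} : Set G) :=
      Subgroup.subset_closure (Set.mem_insert_of_mem _ rfl)
    have hdmem : d ∈ Subgroup.closure ({s, t} : Set G) := by
      rw [← hd]; exact mul_mem hsmem htmem
    apply le_antisymm
    · rintro x ⟨(i | i), rfl⟩
      · exact Subgroup.zpow_mem _ hdmem _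
      · exact mul_mem hsmem (Subgroup.zpow_mem _ hdmem _)
    · apply (Subgroup.closure_le _).2
      rintro x (hx | hx)
      · refine ⟨DihedralGroup.sr 0, ?_⟩
        rw [hx]
        show s * d ^ (zz 0) = s
        rw [show zz 0 = 0 from rfl, zpow_zero, mul_one]
      · refine ⟨DihedralGroup.sr 1, ?_⟩
        rw [hx]
        show s * d ^ (zz 1) = t
        rw [show zz 1 = 1 from rfl, zpow_one, ← hd, ← mul_assoc, hs2, one_mul]
  exact ⟨(MulEquiv.subgroupCongr hrange).symm.trans (MonoidHom.ofInjective hinj).symm⟩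

end Models
section Descent

theorem sections_mul {p q p' q' : TreePerm} (hp : ∀ x w, p (x :: w) = x :: p' w)
    (hq : ∀ x w, q (x :: w) = x :: q' w) : ∀ x w, (p * q) (x :: w) = x :: (p' * q') w := by
  intro x w
  show p (q (x :: w)) = _
  rw [hq, hp]
  rfl

theorem sections_pow {p p' : TreePerm} (hp : ∀ x w, p (x :: w) = x :: p' w) :
    ∀ (n : ℕ) (x : Bool) (w : List Bool), (p ^ n) (x :: w) = x :: (p' ^ n) w := by
  intro n
  induction n with
  | zero => intro x w; rfl
  | succ n ih =>
    intro x w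
    rw [pow_succ, pow_succ]
    exact sections_mul ih hp x w

theorem fix_nil_pow {p : TreePerm} (hp : p [] = []) : ∀ n : ℕ, (p ^ n) [] = [] := by
  intro n
  induction n with
  | zero => rfl
  | succ n ih => rw [pow_succ]; show (p ^ n) (p []) = []; rw [hp, ih]

/-- Descent argument: an automorphism flipping the first level whose square has both
sections equal to `h` or to `h⁻¹` has infinite order. -/
theorem not_finOrder_descent (h u : TreePerm) (hnil : h [] = [])
    (h1 : ∀ x, h [x] = [!x]) (hu : u = h ∨ u = h⁻¹)
    (hrec : ∀ x w, (h * h) (x :: w) = x :: u w) : ¬IsOfFinOrder h := by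
  have hinvnil : h⁻¹ [] = [] := by
    have : h⁻¹ (h []) = [] := Equiv.symm_apply_apply h []
    rwa [hnil] at this
  have hunil : u [] = [] := by
    rcases hu with rfl | rfl
    · exact hnil
    · exact hinvnil
  have hpow2 : ∀ (m : ℕ) x w, ((h * h) ^ m) (x :: w) = x :: (u ^ m) w := sections_pow hrec
  have key : ∀ n : ℕ, 0 < n → h ^ n ≠ 1 := by
    intro n
    induction n using Nat.strong_induction_on with
    | _ n ih =>
      intro hn hone
      rcases Nat.even_or_odd n with ⟨m, hm⟩ | ⟨m, hm⟩
      · -- even n = m + m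
        have hm0 : 0 < m := by omega
        have hsq : h ^ n = (h * h) ^ m := by
          rw [hm, show m + m = 2 * m by ring, pow_mul, pow_two]
        have hum : u ^ m = 1 := by
          have haux : ∀ w, (u ^ m) w = w := by
            intro w
            have hc := congrArg (fun π : TreePerm => π (false :: w)) (hsq.symm.trans hone)
            simp only [Equiv.Perm.coe_one, id_eq] at hc
            rw [hpow2 m false w] at hc
            rw [List.cons.injEq] at hc
            exact hc.2
          apply Equiv.ext
          intro w
          rw [haux w]
          rfl
        have hhm : h ^ m = 1 := by
          rcases hu with rfl | rfl
          · exact hum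
          · rwa [inv_pow, inv_eq_one] at hum
        exact ih m (by omega) hm0 hhm
      · -- odd n = 2 * m + 1
        have hfix : ∀ x : Bool, ((h * h) ^ m) [x] = [x] := by
          intro x
          have := hpow2 m x []
          rwa [fix_nil_pow hunil m] at this
        have heval : (h ^ n) [false] = [true] := by
          rw [hm, pow_succ, pow_mul, pow_two]
          show ((h * h) ^ m) (h [false]) = [true]
          rw [h1 false]
          exact hfix true
        rw [hone] at heval
        simp at heval
  intro hfin
  obtain ⟨n, hn, hone⟩ := isOfFinOrder_iff_pow_eq_one.1 hfin
  exact key n hn hone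

end Descent

section Canonical

open Subgroup

/-- States with every output trivial act trivially. -/
theorem toPerm_eq_one_of_out_one {S : Type*} (A : BinAutomaton S) (h : ∀ s, A.out s = 1)
    (s : S) : A.toPerm s = 1 := by
  apply Equiv.ext
  intro w
  exact id_of_rec A.act A.tr (fun _ => rfl)
    (fun i x w => by rw [BinAutomaton.act_cons, h i]; rfl) w s

/-- States with every output `σ` act by flipping all letters. -/
theorem toPerm_eq_flipAll_of_out_flip {S : Type*} (A : BinAutomaton S)
    (h : ∀ s, A.out s = flipPerm) (s : S) : A.toPerm s = flipAll := by
  apply Equiv.ext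
  intro w
  exact not_of_rec A.act A.tr (fun _ => rfl)
    (fun i x w => by rw [BinAutomaton.act_cons, h i]; rfl) w s

theorem flipAll_mul_self : flipAll * flipAll = 1 := by
  have := inv_mul_cancel flipAll
  rwa [flipAll_inv] at this

theorem iso_of_all_out_one {S : Type*} (A : BinAutomaton S) (h : ∀ s, A.out s = 1) :
    Nonempty (A.autGroup ≃* Unit) := by
  apply iso_unit_of_closure
  rintro x ⟨s, rfl⟩
  exact toPerm_eq_one_of_out_one A h s

theorem iso_of_all_out_flip {S : Type*} [Nonempty S] (A : BinAutomaton S)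
    (h : ∀ s, A.out s = flipPerm) :
    Nonempty (A.autGroup ≃* Multiplicative (ZMod 2)) := by
  obtain ⟨s₀⟩ := ‹Nonempty S›
  apply iso_c2_of_closure (s := flipAll)
  · exact ⟨s₀, toPerm_eq_flipAll_of_out_flip A h s₀⟩
  · rintro x ⟨s, rfl⟩
    exact Or.inl (toPerm_eq_flipAll_of_out_flip A h s)
  · exact flipAll_mul_self
  · exact flipAll_ne_one

/-! ### The adding machine -/

theorem autAdding_one : autAdding.toPerm 1 = 1 := by
  apply Equiv.ext
  intro w
  exact id_of_rec (fun _ : Unit => autAdding.act 1) (fun _ _ => ()) (fun _ => rfl)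
    (fun _ x w => by cases x <;> rfl) w ()

/-- The odometer (binary adding machine). -/
def odometer : TreePerm := autAdding.toPerm 0

theorem odometer_false (w : List Bool) : odometer (false :: w) = true :: w := by
  show autAdding.act 0 (false :: w) = true :: w
  show true :: autAdding.act 1 w = true :: w
  rw [show autAdding.act 1 w = (autAdding.toPerm 1) w from rfl, autAdding_one]
  rfl

theorem odometer_true (w : List Bool) : odometer (true :: w) = false :: odometer w := rfl

theorem odometer_nil : odometer [] = [] := rfl

theorem odometer_single (x : Bool) : odometer [x] = [!x] := by
  cases x
  · rw [odometer_false]; rfl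
  · rw [odometer_true, odometer_nil]; rfl

theorem odometer_sq (x : Bool) (w : List Bool) :
    (odometer * odometer) (x :: w) = x :: odometer w := by
  show odometer (odometer (x :: w)) = _
  cases x
  · rw [odometer_false, odometer_true]
  · rw [odometer_true, odometer_false]

theorem odometer_infinite : ¬IsOfFinOrder odometer :=
  not_finOrder_descent odometer odometer rfl odometer_single (Or.inl rfl) odometer_sq

theorem isoAdding : Nonempty (autAdding.autGroup ≃* Multiplicative ℤ) := by
  apply iso_int_of_closure odometer_infinite
  · rintro x ⟨s, rfl⟩
    fin_cases s
    · exact Subgroup.mem_zpowers odometer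
    · show autAdding.toPerm 1 ∈ _
      rw [autAdding_one]
      exact one_mem _
  · exact Subgroup.subset_closure ⟨0, rfl⟩

/-! ### The automaton `a = σ(a,b)`, `b = (a,a)`, generating `ℤ` with `b = a⁻²` -/

def autZ2 : BinAutomaton (Fin 2) :=
  ⟨![flipPerm, 1], ![fun x => if x then 1 else 0, fun _ => 0]⟩

theorem autZ2_ppq : autZ2.toPerm 0 * autZ2.toPerm 0 * autZ2.toPerm 1 = 1 := by
  apply Equiv.ext
  intro w
  set p := autZ2.toPerm 0 with hp
  set q := autZ2.toPerm 1 with hq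
  show p (p (q w)) = w
  exact id_of_rec
    (f := ![fun w => p (p (q w)), fun w => q (p (p w)), fun w => p (q (p w))])
    (j := fun i x => if i = 0 then (if x then 2 else 1) else
      if i = 1 then (if x then 0 else 2) else (if x then 0 else 1))
    (by intro i; fin_cases i <;> rfl)
    (by
      intro i x w
      fin_cases i <;> cases x
      · show p (p (q (false :: w))) = false :: q (p (p w))
        show p (p (false :: p w)) = _
        show p (true :: p (p w)) = _
        rfl
      · show p (p (q (true :: w))) = true :: p (q (p w))
        show p (p (true :: p w)) = _
        show p (false :: q (p w)) = _
        rfl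
      · show q (p (p (false :: w))) = false :: p (q (p w))
        show q (p (true :: p w)) = _
        show q (false :: q (p w)) = _
        rfl
      · show q (p (p (true :: w))) = true :: p (p (q w))
        show q (p (false :: q w)) = _
        show q (true :: p (q w)) = _
        rfl
      · show p (q (p (false :: w))) = false :: q (p (p w))
        show p (q (true :: p w)) = _
        show p (true :: p (p w)) = _
        rfl
      · show p (q (p (true :: w))) = true :: p (p (q w))
        show p (q (false :: q w)) = _
        show p (false :: p (q w)) = _
        rfl)
    w 0

theorem autZ2_pp : autZ2.toPerm 0 * autZ2.toPerm 0 = (autZ2.toPerm 1)⁻¹ :=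
  (inv_eq_of_mul_eq_one_left autZ2_ppq).symm

theorem autZ2_infinite : ¬IsOfFinOrder (autZ2.toPerm 0) := by
  set p := autZ2.toPerm 0 with hp
  set q := autZ2.toPerm 1 with hq
  apply not_finOrder_descent p p⁻¹ rfl (fun x => by cases x <;> rfl) (Or.inr rfl)
  intro x w
  have h1 : q (x :: p⁻¹ w) = x :: w := by
    show x :: p (p⁻¹ w) = x :: w
    rw [show p (p⁻¹ w) = w from Equiv.apply_symm_apply p w]
  have h2 : q⁻¹ (x :: w) = x :: p⁻¹ w := by
    rw [← h1, show q⁻¹ (q (x :: p⁻¹ w)) = x :: p⁻¹ w from Equiv.symm_apply_apply q _]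
  rw [show p * p = q⁻¹ from autZ2_pp, h2]

theorem isoZ2 : Nonempty (autZ2.autGroup ≃* Multiplicative ℤ) := by
  apply iso_int_of_closure autZ2_infinite
  · rintro x ⟨s, rfl⟩
    fin_cases s
    · exact Subgroup.mem_zpowers _
    · show autZ2.toPerm 1 ∈ _
      have h2 : autZ2.toPerm 1 = (autZ2.toPerm 0 * autZ2.toPerm 0)⁻¹ := by
        rw [autZ2_pp, inv_inv]
      rw [h2]
      exact inv_mem (mul_mem (Subgroup.mem_zpowers _) (Subgroup.mem_zpowers _))
  · exact Subgroup.subset_closure ⟨0, rfl⟩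

/-! ### The dihedral automaton `a = σ(a,a)`, `b = (a,b)` -/

theorem autDInf_alpha_sq : ∀ w, autDInf.toPerm 0 (autDInf.toPerm 0 w) = w := by
  intro w
  have h : ∀ w, autDInf.act 0 w = w.map not :=
    fun w => not_of_rec (fun _ : Unit => autDInf.act 0) (fun _ _ => ()) (fun _ => rfl)
      (fun _ x w => by cases x <;> rfl) w ()
  show autDInf.act 0 (autDInf.act 0 w) = w
  rw [h, h]
  induction w with
  | nil => rfl
  | cons x w ih => simp [ih]

theorem autDInf_invol :
    ∀ w, autDInf.toPerm 0 (autDInf.toPerm 0 w) = w ∧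
      autDInf.toPerm 1 (autDInf.toPerm 1 w) = w := by
  intro w
  set a := autDInf.toPerm 0
  set b := autDInf.toPerm 1
  have key := id_of_rec
    (f := ![fun w => a (a w), fun w => b (b w)])
    (j := fun i x => if i = 0 then 0 else if x then 1 else 0)
    (by intro i; fin_cases i <;> rfl)
    (by
      intro i x w
      fin_cases i <;> cases x
      · show a (a (false :: w)) = false :: a (a w)
        rfl
      · show a (a (true :: w)) = true :: a (a w)
        rfl
      · show b (b (false :: w)) = false :: a (a w)
        rfl
      · show b (b (true :: w)) = true :: b (b w)
        rfl)
  exact ⟨key w 0, key w 1⟩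

theorem autDInf_d_false (w : List Bool) :
    (autDInf.toPerm 0 * autDInf.toPerm 1) (false :: w) = true :: w := by
  show autDInf.toPerm 0 (autDInf.toPerm 1 (false :: w)) = true :: w
  show autDInf.toPerm 0 (false :: autDInf.toPerm 0 w) = true :: w
  show true :: autDInf.toPerm 0 (autDInf.toPerm 0 w) = true :: w
  rw [(autDInf_invol w).1]

theorem autDInf_d_true (w : List Bool) :
    (autDInf.toPerm 0 * autDInf.toPerm 1) (true :: w) =
      false :: (autDInf.toPerm 0 * autDInf.toPerm 1) w := rfl

theorem autDInf_d_infinite : ¬IsOfFinOrder (autDInf.toPerm 0 * autDInf.toPerm 1) := by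
  set d := autDInf.toPerm 0 * autDInf.toPerm 1 with hd
  apply not_finOrder_descent d d rfl ?_ (Or.inl rfl) ?_
  · intro x
    cases x
    · rw [show ([false] : List Bool) = false :: [] from rfl, autDInf_d_false]
      rfl
    · rw [show ([true] : List Bool) = true :: [] from rfl, autDInf_d_true]
      rfl
  · intro x w
    show d (d (x :: w)) = x :: d w
    cases x
    · rw [autDInf_d_false, autDInf_d_true]
    · rw [autDInf_d_true, autDInf_d_false]

theorem isoDInf : Nonempty (autDInf.autGroup ≃* DihedralGroup 0) := by
  rw [autGroup_pair]
  apply iso_dinf_of_closure (d := autDInf.toPerm 0 * autDInf.toPerm 1)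
  · exact Equiv.ext fun w => (autDInf_invol w).1
  · exact Equiv.ext fun w => (autDInf_invol w).2
  · rfl
  · exact autDInf_d_infinite
  · intro h
    have := congrArg (fun π : TreePerm => π [false]) h
    simp only [Equiv.Perm.coe_one, id_eq] at this
    have h2 : autDInf.toPerm 0 [false] = [true] := rfl
    rw [h2] at this
    simp at this

/-! ### The dihedral automaton `a = σ(b,b)`, `b = (a,b)` -/

def autD2 : BinAutomaton (Fin 2) :=
  ⟨![flipPerm, 1], ![fun _ => 1, fun x => if x then 1 else 0]⟩

theorem autD2_invol :
    ∀ w, autD2.toPerm 0 (autD2.toPerm 0 w) = w ∧ autD2.toPerm 1 (autD2.toPerm 1 w) = w := by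
  intro w
  set p := autD2.toPerm 0
  set q := autD2.toPerm 1
  have key := id_of_rec
    (f := ![fun w => p (p w), fun w => q (q w)])
    (j := fun i x => if i = 0 then 1 else if x then 1 else 0)
    (by intro i; fin_cases i <;> rfl)
    (by
      intro i x w
      fin_cases i <;> cases x
      · show p (p (false :: w)) = false :: q (q w)
        rfl
      · show p (p (true :: w)) = true :: q (q w)
        rfl
      · show q (q (false :: w)) = false :: p (p w)
        rfl
      · show q (q (true :: w)) = true :: q (q w)
        rfl)
  exact ⟨key w 0, key w 1⟩

theorem autD2_pp : autD2.toPerm 0 * autD2.toPerm 0 = 1 :=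
  Equiv.ext fun w => (autD2_invol w).1

theorem autD2_qq : autD2.toPerm 1 * autD2.toPerm 1 = 1 :=
  Equiv.ext fun w => (autD2_invol w).2

theorem autD2_d_false (w : List Bool) :
    (autD2.toPerm 1 * autD2.toPerm 0) (false :: w) = true :: w := by
  show autD2.toPerm 1 (autD2.toPerm 0 (false :: w)) = true :: w
  show autD2.toPerm 1 (true :: autD2.toPerm 1 w) = true :: w
  show true :: autD2.toPerm 1 (autD2.toPerm 1 w) = true :: w
  rw [(autD2_invol w).2]

theorem autD2_d_true (w : List Bool) :
    (autD2.toPerm 1 * autD2.toPerm 0) (true :: w) =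
      false :: (autD2.toPerm 0 * autD2.toPerm 1) w := rfl

theorem autD2_d_inv :
    (autD2.toPerm 1 * autD2.toPerm 0)⁻¹ = autD2.toPerm 0 * autD2.toPerm 1 := by
  rw [mul_inv_rev, inv_eq_of_mul_eq_one_right autD2_pp, inv_eq_of_mul_eq_one_right autD2_qq]

theorem autD2_d_infinite : ¬IsOfFinOrder (autD2.toPerm 1 * autD2.toPerm 0) := by
  set d := autD2.toPerm 1 * autD2.toPerm 0 with hd
  apply not_finOrder_descent d d⁻¹ rfl ?_ (Or.inr rfl) ?_
  · intro x
    cases x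
    · rw [show ([false] : List Bool) = false :: [] from rfl, autD2_d_false]
      rfl
    · rw [show ([true] : List Bool) = true :: [] from rfl, autD2_d_true]
      rfl
  · intro x w
    show d (d (x :: w)) = x :: d⁻¹ w
    rw [hd, autD2_d_inv]
    cases x
    · rw [autD2_d_false, autD2_d_true]
    · rw [autD2_d_true, autD2_d_false]

theorem isoD2 : Nonempty (autD2.autGroup ≃* DihedralGroup 0) := by
  rw [autGroup_pair, Set.pair_comm]
  apply iso_dinf_of_closure (d := autD2.toPerm 1 * autD2.toPerm 0)
  · exact autD2_qq
  · exact autD2_pp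
  · rfl
  · exact autD2_d_infinite
  · intro h
    have := congrArg (fun π : TreePerm => π [false, false]) h
    simp only [Equiv.Perm.coe_one, id_eq] at this
    have h2 : autD2.toPerm 1 [false, false] = [false, true] := rfl
    rw [h2] at this
    simp at this

/-! ### C2 automata -/

def autC2a : BinAutomaton (Fin 2) :=
  ⟨![flipPerm, 1], ![fun _ => 0, fun _ => 1]⟩

theorem autC2a_one : autC2a.toPerm 1 = 1 := by
  apply Equiv.ext
  intro w
  exact id_of_rec (fun _ : Unit => autC2a.act 1) (fun _ _ => ()) (fun _ => rfl)
    (fun _ x w => by cases x <;> rfl) w ()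

theorem autC2a_flip : ∀ w, autC2a.act 0 w = w.map not :=
  fun w => not_of_rec (fun _ : Unit => autC2a.act 0) (fun _ _ => ()) (fun _ => rfl)
    (fun _ x w => by cases x <;> rfl) w ()

theorem isoC2a : Nonempty (autC2a.autGroup ≃* Multiplicative (ZMod 2)) := by
  apply iso_c2_of_closure (s := autC2a.toPerm 0)
  · exact ⟨0, rfl⟩
  · rintro x ⟨s, rfl⟩
    fin_cases s
    · exact Or.inl rfl
    · exact Or.inr autC2a_one
  · apply Equiv.ext
    intro w
    show autC2a.act 0 (autC2a.act 0 w) = w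
    rw [autC2a_flip, autC2a_flip]
    induction w with
    | nil => rfl
    | cons x w ih => simp [ih]
  · intro h
    have := congrArg (fun π : TreePerm => π [false]) h
    simp only [Equiv.Perm.coe_one, id_eq] at this
    have h2 : autC2a.toPerm 0 [false] = [true] := rfl
    rw [h2] at this
    simp at this

def autC2b : BinAutomaton (Fin 2) :=
  ⟨![flipPerm, 1], ![fun _ => 1, fun _ => 1]⟩

theorem autC2b_one : autC2b.toPerm 1 = 1 := by
  apply Equiv.ext
  intro w
  exact id_of_rec (fun _ : Unit => autC2b.act 1) (fun _ _ => ()) (fun _ => rfl)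
    (fun _ x w => by cases x <;> rfl) w ()

theorem autC2b_s_cons (x : Bool) (w : List Bool) :
    autC2b.toPerm 0 (x :: w) = (!x) :: w := by
  show (!x) :: autC2b.act 1 w = (!x) :: w
  rw [show autC2b.act 1 w = (autC2b.toPerm 1) w from rfl, autC2b_one]
  rfl

theorem isoC2b : Nonempty (autC2b.autGroup ≃* Multiplicative (ZMod 2)) := by
  apply iso_c2_of_closure (s := autC2b.toPerm 0)
  · exact ⟨0, rfl⟩
  · rintro x ⟨s, rfl⟩
    fin_cases s
    · exact Or.inl rfl
    · exact Or.inr autC2b_one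
  · apply Equiv.ext
    intro w
    show autC2b.toPerm 0 (autC2b.toPerm 0 w) = w
    cases w with
    | nil => rfl
    | cons x w => rw [autC2b_s_cons, autC2b_s_cons, Bool.not_not]
  · intro h
    have := congrArg (fun π : TreePerm => π [false]) h
    simp only [Equiv.Perm.coe_one, id_eq] at this
    rw [autC2b_s_cons] at this
    simp at this

/-! ### Klein automata -/

def autK1 : BinAutomaton (Fin 2) :=
  ⟨![flipPerm, 1], ![fun _ => 0, fun _ => 0]⟩

theorem autK1_flip : ∀ w, autK1.act 0 w = w.map not :=
  fun w => not_of_rec (fun _ : Unit => autK1.act 0) (fun _ _ => ()) (fun _ => rfl)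
    (fun _ x w => by cases x <;> rfl) w ()

theorem autK1_s_sq : ∀ w, autK1.toPerm 0 (autK1.toPerm 0 w) = w := by
  intro w
  show autK1.act 0 (autK1.act 0 w) = w
  rw [autK1_flip, autK1_flip]
  induction w with
  | nil => rfl
  | cons x w ih => simp [ih]

theorem autK1_t_cons (x : Bool) (w : List Bool) :
    autK1.toPerm 1 (x :: w) = x :: autK1.toPerm 0 w := by cases x <;> rfl

theorem autK1_s_cons (x : Bool) (w : List Bool) :
    autK1.toPerm 0 (x :: w) = (!x) :: autK1.toPerm 0 w := by cases x <;> rfl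

theorem isoK1 : Nonempty (autK1.autGroup ≃* Multiplicative (ZMod 2 × ZMod 2)) := by
  rw [autGroup_pair]
  apply iso_klein_of_closure
  · exact Equiv.ext autK1_s_sq
  · apply Equiv.ext
    intro w
    show autK1.toPerm 1 (autK1.toPerm 1 w) = w
    cases w with
    | nil => rfl
    | cons x w =>
      rw [autK1_t_cons, autK1_t_cons, autK1_s_sq]
  · apply Equiv.ext
    intro w
    show autK1.toPerm 0 (autK1.toPerm 1 w) = autK1.toPerm 1 (autK1.toPerm 0 w)
    cases w with
    | nil => rfl
    | cons x w =>
      rw [autK1_t_cons, autK1_s_cons, autK1_s_cons, autK1_t_cons, autK1_s_sq]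
  · intro h
    have := congrArg (fun π : TreePerm => π [false]) h
    simp only [Equiv.Perm.coe_one, id_eq] at this
    rw [show autK1.toPerm 0 [false] = [true] from rfl] at this
    simp at this
  · intro h
    have := congrArg (fun π : TreePerm => π [false, false]) h
    simp only [Equiv.Perm.coe_one, id_eq] at this
    rw [show ([false, false] : List Bool) = false :: [false] from rfl, autK1_t_cons,
      show autK1.toPerm 0 [false] = [true] from rfl] at this
    simp at this
  · intro h
    have h1 := congrArg (fun π : TreePerm => π [false]) h
    have h2 : autK1.toPerm 0 [false] = autK1.toPerm 1 [false] := h1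
    rw [show autK1.toPerm 0 [false] = [true] from rfl,
      show autK1.toPerm 1 [false] = [false] from rfl] at h2
    simp at h2

def autK2 : BinAutomaton (Fin 2) :=
  ⟨![flipPerm, 1], ![fun _ => 1, fun _ => 0]⟩

theorem autK2_p_cons (x : Bool) (w : List Bool) :
    autK2.toPerm 0 (x :: w) = (!x) :: autK2.toPerm 1 w := by cases x <;> rfl

theorem autK2_q_cons (x : Bool) (w : List Bool) :
    autK2.toPerm 1 (x :: w) = x :: autK2.toPerm 0 w := by cases x <;> rfl

theorem autK2_invol :
    ∀ w, autK2.toPerm 0 (autK2.toPerm 0 w) = w ∧ autK2.toPerm 1 (autK2.toPerm 1 w) = w := by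
  intro w
  set p := autK2.toPerm 0
  set q := autK2.toPerm 1
  have key := id_of_rec
    (f := ![fun w => p (p w), fun w => q (q w)])
    (j := fun i x => if i = 0 then 1 else 0)
    (by intro i; fin_cases i <;> rfl)
    (by
      intro i x w
      fin_cases i <;> cases x
      · show p (p (false :: w)) = false :: q (q w)
        rw [autK2_p_cons, autK2_p_cons]
        rfl
      · show p (p (true :: w)) = true :: q (q w)
        rw [autK2_p_cons, autK2_p_cons]
        rfl
      · show q (q (false :: w)) = false :: p (p w)
        rw [autK2_q_cons, autK2_q_cons]
      · show q (q (true :: w)) = true :: p (p w)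
        rw [autK2_q_cons, autK2_q_cons])
  exact ⟨key w 0, key w 1⟩

theorem autK2_comm : ∀ w,
    autK2.toPerm 0 (autK2.toPerm 1 w) = autK2.toPerm 1 (autK2.toPerm 0 w) := by
  intro w
  set p := autK2.toPerm 0
  set q := autK2.toPerm 1
  have key := not_of_rec
    (f := ![fun w => p (q w), fun w => q (p w)])
    (j := fun i x => if i = 0 then 1 else 0)
    (by intro i; fin_cases i <;> rfl)
    (by
      intro i x w
      fin_cases i <;> cases x
      · show p (q (false :: w)) = true :: q (p w)
        rw [autK2_q_cons, autK2_p_cons]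
        rfl
      · show p (q (true :: w)) = false :: q (p w)
        rw [autK2_q_cons, autK2_p_cons]
        rfl
      · show q (p (false :: w)) = true :: p (q w)
        rw [autK2_p_cons, autK2_q_cons]
        rfl
      · show q (p (true :: w)) = false :: p (q w)
        rw [autK2_p_cons, autK2_q_cons]
        rfl)
  exact (key w 0).trans (key w 1).symm

theorem isoK2 : Nonempty (autK2.autGroup ≃* Multiplicative (ZMod 2 × ZMod 2)) := by
  rw [autGroup_pair]
  apply iso_klein_of_closure
  · exact Equiv.ext fun w => (autK2_invol w).1
  · exact Equiv.ext fun w => (autK2_invol w).2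
  · exact Equiv.ext autK2_comm
  · intro h
    have := congrArg (fun π : TreePerm => π [false]) h
    simp only [Equiv.Perm.coe_one, id_eq] at this
    rw [show ([false] : List Bool) = false :: [] from rfl, autK2_p_cons] at this
    simp at this
  · intro h
    have := congrArg (fun π : TreePerm => π [false, false]) h
    simp only [Equiv.Perm.coe_one, id_eq] at this
    rw [show ([false, false] : List Bool) = false :: [false] from rfl, autK2_q_cons,
      show autK2.toPerm 0 [false] = [true] from rfl] at this
    simp at this
  · intro h
    have h1 := congrArg (fun π : TreePerm => π [false]) h
    have h2 : autK2.toPerm 0 [false] = autK2.toPerm 1 [false] := h1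
    rw [show ([false] : List Bool) = false :: [] from rfl, autK2_p_cons, autK2_q_cons] at h2
    simp at h2

end Canonical
section LampIso

open PowerSeries Subgroup

noncomputable section

abbrev RS := PowerSeries (ZMod 2)

theorem RS_add_self (a : RS) : a + a = 0 := by
  have h := two_smul (ZMod 2) a
  rw [show (2 : ZMod 2) = 0 from rfl, zero_smul] at h
  exact h.symm

/-- The geometric series `1 + X + X² + ⋯`, inverse of `1 + X` over `ZMod 2`. -/
def SS : RS := PowerSeries.mk fun _ => (1 : ZMod 2)

theorem coeff_SS (n : ℕ) : coeff n SS = 1 := coeff_mk n _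

theorem oneX_mul_SS : (1 + X : RS) * SS = 1 := by
  ext n
  rw [add_mul, one_mul, map_add]
  cases n with
  | zero =>
    rw [coeff_zero_X_mul, coeff_SS, add_zero, coeff_zero_eq_constantCoeff_apply, map_one]
  | succ n =>
    rw [coeff_succ_X_mul, coeff_SS, coeff_SS, PowerSeries.coeff_one, if_neg (by omega)]
    decide

theorem SS_mul_oneX : SS * (1 + X : RS) = 1 := by
  rw [mul_comm]; exact oneX_mul_SS

/-- `1 + X` as a unit of `ZMod 2⟦X⟧`. -/
def uu : RSˣ := ⟨1 + X, SS, oneX_mul_SS, SS_mul_oneX⟩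

/-- Integer powers of `1 + X`. -/
def upow (m : ℤ) : RS := ((uu ^ m : RSˣ) : RS)

theorem upow_add (a b : ℤ) : upow (a + b) = upow a * upow b := by
  show ((uu ^ (a + b) : RSˣ) : RS) = _
  rw [zpow_add]
  rfl

theorem upow_zero : upow 0 = 1 := by
  show ((uu ^ (0 : ℤ) : RSˣ) : RS) = 1
  rw [zpow_zero, Units.val_one]

theorem upow_one : upow 1 = 1 + X := by
  show ((uu ^ (1 : ℤ) : RSˣ) : RS) = 1 + X
  rw [zpow_one]
  rfl

theorem upow_neg_one : upow (-1) = SS := by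
  show ((uu ^ (-1 : ℤ) : RSˣ) : RS) = SS
  rw [zpow_neg_one]
  rfl

theorem upow_nonneg (k : ℤ) (hk : 0 ≤ k) : upow k = (1 + X : RS) ^ k.toNat := by
  show ((uu ^ k : RSˣ) : RS) = _
  rw [← Int.toNat_of_nonneg hk, zpow_natCast, Units.val_pow_eq_pow_val]
  rfl

/-- coefficient `k` of `(1+X)^k` is `1`. -/
theorem coeff_oneX_pow_self (k : ℕ) : coeff k ((1 + X : RS) ^ k) = 1 := by
  have hcast : (1 + X : RS) = ((Polynomial.X + Polynomial.C (1 : ZMod 2) :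
      Polynomial (ZMod 2)) : RS) := by
    rw [Polynomial.coe_add, Polynomial.coe_X, Polynomial.coe_C, map_one, add_comm]
  have hm : (Polynomial.X + Polynomial.C (1 : ZMod 2)).Monic := Polynomial.monic_X_add_C 1
  have hdeg : ((Polynomial.X + Polynomial.C (1 : ZMod 2)) ^ k).natDegree = k := by
    rw [Polynomial.natDegree_pow, Polynomial.natDegree_X_add_C, mul_one]
  have hc := (hm.pow k).coeff_natDegree
  rw [hdeg] at hc
  rw [hcast, ← Polynomial.coe_pow, Polynomial.coeff_coe, hc]

/-- coefficient `j > e` of `(1+X)^e` is `0`. -/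
theorem coeff_oneX_pow_gt (e j : ℕ) (h : e < j) : coeff j ((1 + X : RS) ^ e) = 0 := by
  have hcast : (1 + X : RS) = ((Polynomial.X + Polynomial.C (1 : ZMod 2) :
      Polynomial (ZMod 2)) : RS) := by
    rw [Polynomial.coe_add, Polynomial.coe_X, Polynomial.coe_C, map_one, add_comm]
  have hdeg : ((Polynomial.X + Polynomial.C (1 : ZMod 2)) ^ e).natDegree = e := by
    rw [Polynomial.natDegree_pow, Polynomial.natDegree_X_add_C, mul_one]
  rw [hcast, ← Polynomial.coe_pow, Polynomial.coeff_coe]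
  apply Polynomial.coeff_eq_zero_of_natDegree_lt
  rw [hdeg]
  exact h

theorem uu_infinite : ¬IsOfFinOrder uu := by
  intro hf
  obtain ⟨n, hn, hone⟩ := isOfFinOrder_iff_pow_eq_one.1 hf
  have hval : (1 + X : RS) ^ n = 1 := by
    have := congrArg (Units.val) hone
    rwa [Units.val_pow_eq_pow_val, Units.val_one] at this
  have h1 := coeff_oneX_pow_self n
  rw [hval, PowerSeries.coeff_one] at h1
  rw [if_neg (by omega)] at h1
  exact one_ne_zero h1.symm

theorem upow_eq_one (m : ℤ) (h : upow m = 1) : m = 0 := by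
  have hu : uu ^ m = 1 := Units.ext h
  exact zpow_eq_one_of_infinite uu_infinite hu

/-! ### Words and series -/

def bitZ (x : Bool) : ZMod 2 := if x then 1 else 0

theorem bitZ_decide (z : ZMod 2) : bitZ (decide (z = 1)) = z := by revert z; decide

def wordS : List Bool → RS
  | [] => 0
  | x :: w => C (bitZ x) + X * wordS w

def tailS (f : RS) : RS := PowerSeries.mk fun n => coeff (n + 1) f

theorem coeff_tailS (f : RS) (n : ℕ) : coeff n (tailS f) = coeff (n + 1) f :=
  coeff_mk n _

theorem tailS_add (f g : RS) : tailS (f + g) = tailS f + tailS g := by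
  ext n
  rw [map_add, coeff_tailS, coeff_tailS, coeff_tailS, map_add]

def wordOf : ℕ → RS → List Bool
  | 0, _ => []
  | n + 1, f => (decide (coeff 0 f = 1)) :: wordOf n (tailS f)

theorem length_wordOf : ∀ (n : ℕ) (f : RS), (wordOf n f).length = n := by
  intro n
  induction n with
  | zero => intro f; rfl
  | succ n ih => intro f; show (wordOf n (tailS f)).length + 1 = n + 1; rw [ih]

theorem wordOf_congr : ∀ (n : ℕ) (f g : RS),
    (∀ k < n, coeff k f = coeff k g) → wordOf n f = wordOf n g := by
  intro n
  induction n with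
  | zero => intro f g _; rfl
  | succ n ih =>
    intro f g h
    show _ :: wordOf n (tailS f) = _ :: wordOf n (tailS g)
    rw [h 0 (by omega), ih (tailS f) (tailS g) fun k hk => by
      rw [coeff_tailS, coeff_tailS]; exact h (k + 1) (by omega)]

theorem coeff_zero_wordS (x : Bool) (w : List Bool) :
    coeff 0 (wordS (x :: w)) = bitZ x := by
  show coeff 0 (C (bitZ x) + X * wordS w) = bitZ x
  rw [map_add, coeff_zero_X_mul, add_zero, coeff_zero_eq_constantCoeff_apply, constantCoeff_C]

theorem coeff_succ_wordS (x : Bool) (w : List Bool) (k : ℕ) :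
    coeff (k + 1) (wordS (x :: w)) = coeff k (wordS w) := by
  show coeff (k + 1) (C (bitZ x) + X * wordS w) = _
  rw [map_add, coeff_C, if_neg (by omega), zero_add, coeff_succ_X_mul]

theorem tailS_wordS (x : Bool) (w : List Bool) : tailS (wordS (x :: w)) = wordS w := by
  ext k
  rw [coeff_tailS, coeff_succ_wordS]

theorem wordOf_wordS : ∀ w : List Bool, wordOf w.length (wordS w) = w := by
  intro w
  induction w with
  | nil => rfl
  | cons x w ih =>
    show (decide (coeff 0 (wordS (x :: w)) = 1)) ::
      wordOf w.length (tailS (wordS (x :: w))) = x :: w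
    rw [coeff_zero_wordS, tailS_wordS, ih]
    congr 1
    cases x <;> rfl

theorem coeff_wordS_wordOf : ∀ (n : ℕ) (f : RS) (k : ℕ), k < n →
    coeff k (wordS (wordOf n f)) = coeff k f := by
  intro n
  induction n with
  | zero => intro f k hk; omega
  | succ n ih =>
    intro f k hk
    show coeff k (wordS ((decide (coeff 0 f = 1)) :: wordOf n (tailS f))) = _
    cases k with
    | zero => rw [coeff_zero_wordS, bitZ_decide]
    | succ k =>
      rw [coeff_succ_wordS, ih (tailS f) k (by omega), coeff_tailS]

theorem coeff_mul_congr (A f g : RS) (n : ℕ)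
    (h : ∀ k < n, coeff k f = coeff k g) :
    ∀ k < n, coeff k (A * f) = coeff k (A * g) := by
  intro k hk
  rw [coeff_mul, coeff_mul]
  apply Finset.sum_congr rfl
  intro p hp
  rw [Finset.HasAntidiagonal.mem_antidiagonal] at hp
  rw [h p.2 (by omega)]

/-! ### The series of a lamplighter element -/

def lampsS (f : ℤ →₀ ZMod 2) : RS := f.sum fun k v => v • upow k

theorem lampsS_zero : lampsS 0 = 0 := Finsupp.sum_zero_index

theorem lampsS_add (f g : ℤ →₀ ZMod 2) : lampsS (f + g) = lampsS f + lampsS g :=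
  Finsupp.sum_add_index' (fun k => zero_smul _ _) (fun a b₁ b₂ => add_smul b₁ b₂ _)

theorem lampsS_shift (m : ℤ) (f : ℤ →₀ ZMod 2) :
    lampsS (shiftF m f) = upow m * lampsS f := by
  show (Finsupp.equivMapDomain (shiftE m) f).sum (fun k v => v • upow k) = _
  rw [Finsupp.sum_equivMapDomain]
  unfold lampsS
  rw [Finsupp.mul_sum]
  apply Finset.sum_congr rfl
  intro k _
  show f k • upow ((shiftE m) k) = upow m * (f k • upow k)
  show f k • upow (k + m) = _
  rw [show k + m = m + k by ring, upow_add, mul_smul_comm]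

theorem lampsS_single (k : ℤ) : lampsS (Finsupp.single k 1) = upow k := by
  unfold lampsS
  rw [Finsupp.sum_single_index, one_smul]
  exact zero_smul _ _

theorem lampsS_eq_zero (f : ℤ →₀ ZMod 2) (h : lampsS f = 0) : f = 0 := by
  by_contra hf
  have hs : f.support.Nonempty := Finsupp.support_nonempty_iff.2 hf
  set m0 := f.support.min' hs with hm0
  set M := f.support.max' hs with hM
  have hm0M : m0 ≤ M := f.support.min'_le M (f.support.max'_mem hs)
  have hsum : upow (-m0) * lampsS f = ∑ k ∈ f.support, upow (k - m0) := by
    unfold lampsS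
    rw [Finsupp.mul_sum]
    apply Finset.sum_congr rfl
    intro k hk
    have hv : f k = 1 := by
      have h1 : f k ≠ 0 := Finsupp.mem_support_iff.1 hk
      revert h1
      generalize f k = z
      revert z
      decide
    show upow (-m0) * (f k • upow k) = upow (k - m0)
    rw [hv, one_smul, ← upow_add]
    congr 1
    ring
  have hcoeff : coeff (M - m0).toNat (∑ k ∈ f.support, upow (k - m0)) = 1 := by
    rw [map_sum, Finset.sum_eq_single M]
    · rw [upow_nonneg _ (by omega)]
      exact coeff_oneX_pow_self _
    · intro k hk hkM
      have hkle : k ≤ M := f.support.le_max' k hk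
      have hge : m0 ≤ k := f.support.min'_le k hk
      rw [upow_nonneg _ (by omega)]
      exact coeff_oneX_pow_gt _ _ (by omega)
    · intro hM'
      exact absurd (f.support.max'_mem hs) hM'
  rw [← hsum, h, mul_zero, map_zero] at hcoeff
  exact one_ne_zero hcoeff.symm

def gSeries (g : Lamplighter) : RS := lampsS g.lamps + upow (g.pos - 1) + upow (-1)

theorem gSeries_cocycle (g h : Lamplighter) :
    gSeries (g * h) = upow g.pos * gSeries h + gSeries g := by
  unfold gSeries
  rw [Lamplighter.mul_lamps, Lamplighter.mul_pos, lampsS_add, lampsS_shift, mul_add, mul_add,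
    ← upow_add, ← upow_add]
  rw [show g.pos + (h.pos - 1) = g.pos + h.pos - 1 by ring,
    show g.pos + -1 = g.pos - 1 by ring]
  linear_combination -RS_add_self (upow (g.pos - 1))

/-! ### The action of a lamplighter element on words -/

def gApply (g : Lamplighter) (w : List Bool) : List Bool :=
  wordOf w.length (upow g.pos * wordS w + gSeries g)

theorem length_gApply (g : Lamplighter) (w : List Bool) : (gApply g w).length = w.length :=
  length_wordOf _ _

theorem gSeries_one : gSeries 1 = 0 := by
  unfold gSeries
  rw [Lamplighter.one_lamps, Lamplighter.one_pos, lampsS_zero, zero_add, zero_sub,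
    RS_add_self]

theorem gApply_one (w : List Bool) : gApply 1 w = w := by
  unfold gApply
  rw [gSeries_one, Lamplighter.one_pos, upow_zero, one_mul, add_zero, wordOf_wordS]

theorem gApply_mul (g h : Lamplighter) (w : List Bool) :
    gApply g (gApply h w) = gApply (g * h) w := by
  unfold gApply
  rw [length_wordOf]
  have step1 : wordOf w.length
      (upow g.pos * wordS (wordOf w.length (upow h.pos * wordS w + gSeries h)) + gSeries g) =
      wordOf w.length (upow g.pos * (upow h.pos * wordS w + gSeries h) + gSeries g) := by
    apply wordOf_congr
    intro k hk
    rw [map_add, map_add]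
    congr 1
    exact coeff_mul_congr _ _ _ w.length
      (fun j hj => coeff_wordS_wordOf w.length _ j hj) k hk
  rw [step1]
  congr 1
  rw [mul_add, ← mul_assoc, gSeries_cocycle, Lamplighter.mul_pos, upow_add, add_assoc]

/-- The tree automorphism defined by a lamplighter element. -/
def lampPerm (g : Lamplighter) : TreePerm where
  toFun := gApply g
  invFun := gApply g⁻¹
  left_inv := fun w => by rw [gApply_mul, inv_mul_cancel, gApply_one]
  right_inv := fun w => by rw [gApply_mul, mul_inv_cancel, gApply_one]

def lampHom : Lamplighter →* TreePerm :=
  MonoidHom.mk' lampPerm fun g h => Equiv.ext fun w => (gApply_mul g h w).symm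

/-! ### Injectivity -/

theorem wordS_replicate (n : ℕ) : wordS (List.replicate n false) = 0 := by
  induction n with
  | zero => rfl
  | succ n ih =>
    show C (bitZ false) + X * wordS (List.replicate n false) = 0
    rw [ih, mul_zero, add_zero, show bitZ false = 0 from rfl, map_zero]

theorem wordS_one (n : ℕ) : wordS (true :: List.replicate n false) = 1 := by
  show C (bitZ true) + X * wordS (List.replicate n false) = 1
  rw [wordS_replicate, mul_zero, add_zero, show bitZ true = 1 from rfl, map_one]

theorem coeff_of_wordOf_eq {n : ℕ} {F : RS} {L : List Bool} (h : wordOf n F = L)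
    {k : ℕ} (hk : k < n) : coeff k F = coeff k (wordS L) := by
  rw [← h, coeff_wordS_wordOf n F k hk]

theorem lampHom_inj : Function.Injective lampHom := by
  rw [injective_iff_map_eq_one]
  intro g hg
  have happ : ∀ w : List Bool, gApply g w = w := by
    intro w
    exact congrArg (fun π : TreePerm => π w) hg
  have hser : gSeries g = 0 := by
    ext k
    have h1 := happ (List.replicate (k + 1) false)
    have h2 : wordOf (k + 1) (gSeries g) = List.replicate (k + 1) false := by
      have := h1
      unfold gApply at this
      rwa [List.length_replicate, wordS_replicate, mul_zero, zero_add] at this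
    have h3 := coeff_of_wordOf_eq h2 (show k < k + 1 by omega)
    rw [h3, wordS_replicate, map_zero]
  have hpos : g.pos = 0 := by
    apply upow_eq_one
    ext k
    have h1 := happ (true :: List.replicate k false)
    have h2 : wordOf (k + 1) (upow g.pos) = true :: List.replicate k false := by
      have := h1
      unfold gApply at this
      rwa [List.length_cons, List.length_replicate, wordS_one, mul_one, hser,
        add_zero] at this
    have h3 := coeff_of_wordOf_eq h2 (show k < k + 1 by omega)
    rw [h3, wordS_one]
  have hlamps : g.lamps = 0 := by
    apply lampsS_eq_zero
    have := hser
    unfold gSeries at this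
    rw [hpos, zero_sub, add_assoc, RS_add_self, add_zero] at this
    exact this
  have : g = 1 := Lamplighter.ext hlamps hpos
  exact this

/-! ### Identification of the generators -/

def LA : Lamplighter := ⟨Finsupp.single 0 1, 1⟩
def LB : Lamplighter := ⟨0, 1⟩

theorem gSeries_LA : gSeries LA = SS := by
  unfold gSeries
  show lampsS (Finsupp.single 0 1) + upow (1 - 1) + upow (-1) = SS
  rw [lampsS_single, show (1 - 1 : ℤ) = 0 from rfl, upow_zero, RS_add_self, zero_add,
    upow_neg_one]

theorem gSeries_LB : gSeries LB = 1 + SS := by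
  unfold gSeries
  show lampsS 0 + upow (1 - 1) + upow (-1) = 1 + SS
  rw [lampsS_zero, show (1 - 1 : ℤ) = 0 from rfl, upow_zero, upow_neg_one, zero_add]

theorem tailS_SS : tailS SS = SS := by
  ext k
  rw [coeff_tailS, coeff_SS, coeff_SS]

theorem tailS_one : tailS (1 : RS) = 0 := by
  ext k
  rw [coeff_tailS, PowerSeries.coeff_one, if_neg (by omega), map_zero]

theorem coeff_zero_oneX_mul (f : RS) : coeff 0 ((1 + X) * f) = coeff 0 f := by
  rw [add_mul, one_mul, map_add, coeff_zero_X_mul, add_zero]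

theorem coeff_succ_oneX_mul (f : RS) (k : ℕ) :
    coeff (k + 1) ((1 + X) * f) =
      coeff (k + 1) f + coeff k f := by
  rw [add_mul, one_mul, map_add, coeff_succ_X_mul]

theorem tailS_oneX_mul_wordS (x : Bool) (w : List Bool) :
    tailS ((1 + X) * wordS (x :: w)) = (1 + X) * wordS w + C (bitZ x) := by
  ext k
  rw [coeff_tailS, coeff_succ_oneX_mul, map_add]
  cases k with
  | zero =>
    rw [coeff_succ_wordS, coeff_zero_wordS, coeff_zero_oneX_mul,
      coeff_zero_eq_constantCoeff_apply (C (bitZ x)), constantCoeff_C]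
  | succ k =>
    rw [coeff_succ_wordS, coeff_succ_wordS, coeff_succ_oneX_mul, coeff_C,
      if_neg (by omega), add_zero]

/-- The two states of `autLamp` act by the series formulas with constants `S` and `1 + S`. -/
theorem lamp_act_formula : ∀ w : List Bool,
    autLamp.act 0 w = wordOf w.length ((1 + X : RS) * wordS w + SS) ∧
    autLamp.act 1 w = wordOf w.length ((1 + X : RS) * wordS w + (1 + SS)) := by
  intro w
  induction w with
  | nil => exact ⟨rfl, rfl⟩
  | cons x w ih =>
    have htail0 : tailS ((1 + X : RS) * wordS (x :: w) + SS) =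
        (1 + X) * wordS w + (C (bitZ x) + SS) := by
      rw [tailS_add, tailS_SS, tailS_oneX_mul_wordS, add_assoc]
    have htail1 : tailS ((1 + X : RS) * wordS (x :: w) + (1 + SS)) =
        (1 + X) * wordS w + (C (bitZ x) + SS) := by
      rw [tailS_add, tailS_add, tailS_one, tailS_SS, zero_add, tailS_oneX_mul_wordS,
        add_assoc]
    have hc0 : coeff 0 ((1 + X : RS) * wordS (x :: w) + SS) = bitZ x + 1 := by
      rw [map_add, coeff_zero_oneX_mul, coeff_zero_wordS, coeff_SS]
    have hc1 : coeff 0 ((1 + X : RS) * wordS (x :: w) + (1 + SS)) = bitZ x := by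
      rw [map_add, coeff_zero_oneX_mul, coeff_zero_wordS, map_add, PowerSeries.coeff_one,
        if_pos rfl, coeff_SS]
      cases x <;> decide
    have hCfalse : C (bitZ false) + SS = SS := by
      rw [show bitZ false = 0 from rfl, map_zero, zero_add]
    have hCtrue : C (bitZ true) + SS = 1 + SS := by
      rw [show bitZ true = 1 from rfl, map_one]
    constructor
    · cases x
      · show true :: autLamp.act 0 w =
          (decide (coeff 0 ((1 + X : RS) * wordS (false :: w) + SS) = 1)) ::
            wordOf w.length (tailS ((1 + X : RS) * wordS (false :: w) + SS))
        rw [hc0, htail0, hCfalse, ← ih.1]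
        rfl
      · show false :: autLamp.act 1 w =
          (decide (coeff 0 ((1 + X : RS) * wordS (true :: w) + SS) = 1)) ::
            wordOf w.length (tailS ((1 + X : RS) * wordS (true :: w) + SS))
        rw [hc0, htail0, hCtrue, ← ih.2]
        rfl
    · cases x
      · show false :: autLamp.act 0 w =
          (decide (coeff 0 ((1 + X : RS) * wordS (false :: w) + (1 + SS)) = 1)) ::
            wordOf w.length (tailS ((1 + X : RS) * wordS (false :: w) + (1 + SS)))
        rw [hc1, htail1, hCfalse, ← ih.1]
        rfl
      · show true :: autLamp.act 1 w =
          (decide (coeff 0 ((1 + X : RS) * wordS (true :: w) + (1 + SS)) = 1)) ::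
            wordOf w.length (tailS ((1 + X : RS) * wordS (true :: w) + (1 + SS)))
        rw [hc1, htail1, hCtrue, ← ih.2]
        rfl

theorem lampHom_LA : lampHom LA = autLamp.toPerm 0 := by
  apply Equiv.ext
  intro w
  show gApply LA w = autLamp.act 0 w
  unfold gApply
  rw [gSeries_LA, show LA.pos = 1 from rfl, upow_one, (lamp_act_formula w).1]

theorem lampHom_LB : lampHom LB = autLamp.toPerm 1 := by
  apply Equiv.ext
  intro w
  show gApply LB w = autLamp.act 1 w
  unfold gApply
  rw [gSeries_LB, show LB.pos = 1 from rfl, upow_one, (lamp_act_formula w).2]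

/-! ### Generation -/

theorem LB_zpow (m : ℤ) : (LB ^ m) = (⟨0, m⟩ : Lamplighter) := by
  induction m using Int.induction_on with
  | zero => rfl
  | succ k ih =>
    rw [show ((k : ℤ) + 1) = (k : ℤ) + 1 from rfl, zpow_add_one, ih]
    apply Lamplighter.ext
    · show (0 : ℤ →₀ ZMod 2) + shiftF _ 0 = 0
      rw [shiftF_zero_fun, add_zero]
    · rfl
  | pred k ih =>
    rw [sub_eq_add_neg, zpow_add, zpow_neg_one, ih]
    apply Lamplighter.ext
    · show (0 : ℤ →₀ ZMod 2) + shiftF _ (LB⁻¹.lamps) = 0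
      rw [show LB⁻¹.lamps = shiftF (-1) (-0) from rfl, neg_zero, shiftF_zero_fun,
        shiftF_zero_fun, add_zero]
    · show (-(k : ℤ)) + LB⁻¹.pos = -(k : ℤ) - 1
      show (-(k : ℤ)) + (-(1 : ℤ)) = -(k : ℤ) - 1
      ring

theorem lamp_single_decomp (k : ℤ) :
    (⟨Finsupp.single k 1, 0⟩ : Lamplighter) = LB ^ k * (LA * LB⁻¹) * LB ^ (-k) := by
  have hAB : LA * LB⁻¹ = (⟨Finsupp.single 0 1, 0⟩ : Lamplighter) := by
    apply Lamplighter.ext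
    · show Finsupp.single 0 1 + shiftF 1 (shiftF (-1) (-0)) = Finsupp.single 0 1
      rw [neg_zero, shiftF_zero_fun, shiftF_zero_fun, add_zero]
    · show (1 : ℤ) + (-1) = 0
      ring
  rw [hAB, LB_zpow, LB_zpow]
  apply Lamplighter.ext
  · show Finsupp.single k 1 =
      ((0 : ℤ →₀ ZMod 2) + shiftF k (Finsupp.single 0 1)) + shiftF (k + 0) 0
    rw [shiftF_zero_fun, add_zero, zero_add]
    show Finsupp.single k 1 = Finsupp.equivMapDomain (shiftE k) (Finsupp.single 0 1)
    rw [Finsupp.equivMapDomain_single]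
    show Finsupp.single k 1 = Finsupp.single ((0 : ℤ) + k) 1
    rw [zero_add]
  · show (0 : ℤ) = (k + 0) + (-k)
    ring

theorem lamp_generated (g : Lamplighter) :
    g ∈ Subgroup.closure ({LA, LB} : Set Lamplighter) := by
  have hLA : LA ∈ Subgroup.closure ({LA, LB} : Set Lamplighter) :=
    Subgroup.subset_closure (Set.mem_insert _ _)
  have hLB : LB ∈ Subgroup.closure ({LA, LB} : Set Lamplighter) :=
    Subgroup.subset_closure (Set.mem_insert_of_mem _ rfl)
  have hB : ∀ m : ℤ, (⟨0, m⟩ : Lamplighter) ∈ Subgroup.closure ({LA, LB} : Set Lamplighter) := by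
    intro m
    rw [← LB_zpow]
    exact zpow_mem hLB m
  have hsingle : ∀ k : ℤ,
      (⟨Finsupp.single k 1, 0⟩ : Lamplighter) ∈ Subgroup.closure ({LA, LB} : Set Lamplighter) := by
    intro k
    rw [lamp_single_decomp]
    exact mul_mem (mul_mem (zpow_mem hLB k) (mul_mem hLA (inv_mem hLB))) (zpow_mem hLB (-k))
  have hdecomp : g = (⟨g.lamps, 0⟩ : Lamplighter) * ⟨0, g.pos⟩ := by
    apply Lamplighter.ext
    · show g.lamps = g.lamps + shiftF 0 0
      rw [shiftF_zero_fun, add_zero]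
    · show g.pos = 0 + g.pos
      rw [zero_add]
  rw [hdecomp]
  refine mul_mem ?_ (hB g.pos)
  generalize g.lamps = f
  induction f using Finsupp.induction with
  | zero => exact one_mem _
  | single_add a b f ha hb ih =>
    have hb1 : b = 1 := by
      revert hb
      generalize b = z
      revert z
      decide
    have hsplit : (⟨Finsupp.single a b + f, 0⟩ : Lamplighter) =
        (⟨Finsupp.single a 1, 0⟩ : Lamplighter) * (⟨f, 0⟩ : Lamplighter) := by
      apply Lamplighter.ext
      · show Finsupp.single a b + f = Finsupp.single a 1 + shiftF 0 f
        rw [hb1, shiftF_zero]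
      · show (0 : ℤ) = 0 + 0
        ring
    rw [hsplit]
    exact mul_mem (hsingle a) ih

theorem lampHom_range : lampHom.range = autLamp.autGroup := by
  have htop : (⊤ : Subgroup Lamplighter) = Subgroup.closure {LA, LB} := by
    apply le_antisymm
    · intro g _
      exact lamp_generated g
    · exact le_top
  rw [MonoidHom.range_eq_map, htop, MonoidHom.map_closure, Set.image_pair, lampHom_LA,
    lampHom_LB, autGroup_pair]

theorem isoLamp : Nonempty (autLamp.autGroup ≃* Lamplighter) :=
  ⟨(MulEquiv.subgroupCongr lampHom_range).symm.trans (MonoidHom.ofInjective lampHom_inj).symm⟩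

end

end LampIso
section Assembly

open Subgroup

/-- The classification predicate: the subgroup is one of the six groups. -/
def Result (H : Subgroup TreePerm) : Prop :=
  Nonempty (H ≃* Unit) ∨ Nonempty (H ≃* Multiplicative (ZMod 2)) ∨
  Nonempty (H ≃* Multiplicative (ZMod 2 × ZMod 2)) ∨ Nonempty (H ≃* Multiplicative ℤ) ∨
  Nonempty (H ≃* DihedralGroup 0) ∨ Nonempty (H ≃* Lamplighter)

theorem Result_congr {H K : Subgroup TreePerm} (h : H = K) (hH : Result H) : Result K := by
  subst h
  exact hH

theorem BinAutomaton.toPerm_congr {S : Type*} {A B : BinAutomaton S}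
    (hout : ∀ s, A.out s = B.out s) (htr : ∀ s x, A.tr s x = B.tr s x) (s : S) :
    A.toPerm s = B.toPerm s := by
  apply Equiv.ext
  intro w
  show A.act s w = B.act s w
  exact B.act_unique A.act (fun _ => rfl)
    (fun s x w => by rw [BinAutomaton.act_cons, hout s, htr s x]) w s

theorem BinAutomaton.autGroup_congr {S : Type*} {A B : BinAutomaton S}
    (hout : ∀ s, A.out s = B.out s) (htr : ∀ s x, A.tr s x = B.tr s x) :
    A.autGroup = B.autGroup := by
  unfold BinAutomaton.autGroup
  rw [show A.toPerm = B.toPerm from funext (BinAutomaton.toPerm_congr hout htr)]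

theorem Result_of_eq {A B : BinAutomaton (Fin 2)} (hout : ∀ s, A.out s = B.out s)
    (htr : ∀ s x, A.tr s x = B.tr s x) (h : Result B.autGroup) : Result A.autGroup :=
  Result_congr (BinAutomaton.autGroup_congr hout htr).symm h

theorem Result_flipConj {S : Type*} (A : BinAutomaton S) (h : Result A.autGroup) :
    Result A.flipConj.autGroup := by
  rcases h with h | h | h | h | h | h
  · exact Or.inl (iso_flipConj A h)
  · exact Or.inr (Or.inl (iso_flipConj A h))
  · exact Or.inr (Or.inr (Or.inl (iso_flipConj A h)))
  · exact Or.inr (Or.inr (Or.inr (Or.inl (iso_flipConj A h))))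
  · exact Or.inr (Or.inr (Or.inr (Or.inr (Or.inl (iso_flipConj A h)))))
  · exact Or.inr (Or.inr (Or.inr (Or.inr (Or.inr (iso_flipConj A h)))))

theorem Result_invAut {S : Type*} (A : BinAutomaton S) (h : Result A.autGroup) :
    Result A.invAut.autGroup :=
  Result_congr A.autGroup_invAut.symm h

theorem fin2cases : ∀ i : Fin 2, i = 0 ∨ i = 1 := by decide

/-- abbreviations for the six disjuncts -/
theorem Result.unit {H : Subgroup TreePerm} (h : Nonempty (H ≃* Unit)) : Result H := Or.inl h
theorem Result.c2 {H : Subgroup TreePerm} (h : Nonempty (H ≃* Multiplicative (ZMod 2))) : Result H :=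
  Or.inr (Or.inl h)
theorem Result.klein {H : Subgroup TreePerm} (h : Nonempty (H ≃* Multiplicative (ZMod 2 × ZMod 2))) : Result H :=
  Or.inr (Or.inr (Or.inl h))
theorem Result.int {H : Subgroup TreePerm} (h : Nonempty (H ≃* Multiplicative ℤ)) : Result H :=
  Or.inr (Or.inr (Or.inr (Or.inl h)))
theorem Result.dinf {H : Subgroup TreePerm} (h : Nonempty (H ≃* DihedralGroup 0)) : Result H :=
  Or.inr (Or.inr (Or.inr (Or.inr (Or.inl h))))
theorem Result.lamp {H : Subgroup TreePerm} (h : Nonempty (H ≃* Lamplighter)) : Result H :=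
  Or.inr (Or.inr (Or.inr (Or.inr (Or.inr h))))

theorem classifyMixed (A : BinAutomaton (Fin 2)) (h0 : A.out 0 = flipPerm)
    (h1 : A.out 1 = 1) : Result A.autGroup := by
  have hout : ∀ B : BinAutomaton (Fin 2), B.out 0 = flipPerm → B.out 1 = 1 →
      ∀ s, A.out s = B.out s := by
    intro B hb0 hb1 s
    rcases fin2cases s with rfl | rfl
    · rw [h0, hb0]
    · rw [h1, hb1]
  rcases fin2cases (A.tr 0 false) with e1 | e1 <;> rcases fin2cases (A.tr 0 true) with e2 | e2 <;>
    rcases fin2cases (A.tr 1 false) with e3 | e3 <;> rcases fin2cases (A.tr 1 true) with e4 | e4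
  · -- (0,0,0,0) : Klein, autK1
    refine Result_of_eq (B := autK1) (hout _ (by decide) (by decide)) ?_ (Result.klein isoK1)
    intro s x
    rcases fin2cases s with rfl | rfl <;> cases x
    · rw [e1]; decide
    · rw [e2]; decide
    · rw [e3]; decide
    · rw [e4]; decide
  · -- (0,0,0,1) : D∞, autDInf
    refine Result_of_eq (B := autDInf) (hout _ (by decide) (by decide)) ?_ (Result.dinf isoDInf)
    intro s x
    rcases fin2cases s with rfl | rfl <;> cases x
    · rw [e1]; decide
    · rw [e2]; decide
    · rw [e3]; decide
    · rw [e4]; decide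
  · -- (0,0,1,0) : D∞, flipConj autDInf
    refine Result_of_eq (B := autDInf.flipConj) (hout _ (by decide) (by decide)) ?_
      (Result_flipConj autDInf (Result.dinf isoDInf))
    intro s x
    rcases fin2cases s with rfl | rfl <;> cases x
    · rw [e1]; decide
    · rw [e2]; decide
    · rw [e3]; decide
    · rw [e4]; decide
  · -- (0,0,1,1) : C2, autC2a
    refine Result_of_eq (B := autC2a) (hout _ (by decide) (by decide)) ?_ (Result.c2 isoC2a)
    intro s x
    rcases fin2cases s with rfl | rfl <;> cases x
    · rw [e1]; decide
    · rw [e2]; decide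
    · rw [e3]; decide
    · rw [e4]; decide
  · -- (0,1,0,0) : ℤ, autZ2
    refine Result_of_eq (B := autZ2) (hout _ (by decide) (by decide)) ?_ (Result.int isoZ2)
    intro s x
    rcases fin2cases s with rfl | rfl <;> cases x
    · rw [e1]; decide
    · rw [e2]; decide
    · rw [e3]; decide
    · rw [e4]; decide
  · -- (0,1,0,1) : lamplighter, autLamp
    refine Result_of_eq (B := autLamp) (hout _ (by decide) (by decide)) ?_ (Result.lamp isoLamp)
    intro s x
    rcases fin2cases s with rfl | rfl <;> cases x
    · rw [e1]; decide
    · rw [e2]; decide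
    · rw [e3]; decide
    · rw [e4]; decide
  · -- (0,1,1,0) : lamplighter, flipConj (invAut autLamp)
    refine Result_of_eq (B := autLamp.invAut.flipConj) (hout _ (by decide) (by decide)) ?_
      (Result_flipConj autLamp.invAut (Result_invAut autLamp (Result.lamp isoLamp)))
    intro s x
    rcases fin2cases s with rfl | rfl <;> cases x
    · rw [e1]; decide
    · rw [e2]; decide
    · rw [e3]; decide
    · rw [e4]; decide
  · -- (0,1,1,1) : ℤ, invAut autAdding
    refine Result_of_eq (B := autAdding.invAut) (hout _ (by decide) (by decide)) ?_
      (Result_invAut autAdding (Result.int isoAdding))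
    intro s x
    rcases fin2cases s with rfl | rfl <;> cases x
    · rw [e1]; decide
    · rw [e2]; decide
    · rw [e3]; decide
    · rw [e4]; decide
  · -- (1,0,0,0) : ℤ, flipConj autZ2
    refine Result_of_eq (B := autZ2.flipConj) (hout _ (by decide) (by decide)) ?_
      (Result_flipConj autZ2 (Result.int isoZ2))
    intro s x
    rcases fin2cases s with rfl | rfl <;> cases x
    · rw [e1]; decide
    · rw [e2]; decide
    · rw [e3]; decide
    · rw [e4]; decide
  · -- (1,0,0,1) : lamplighter, invAut autLamp
    refine Result_of_eq (B := autLamp.invAut) (hout _ (by decide) (by decide)) ?_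
      (Result_invAut autLamp (Result.lamp isoLamp))
    intro s x
    rcases fin2cases s with rfl | rfl <;> cases x
    · rw [e1]; decide
    · rw [e2]; decide
    · rw [e3]; decide
    · rw [e4]; decide
  · -- (1,0,1,0) : lamplighter, flipConj autLamp
    refine Result_of_eq (B := autLamp.flipConj) (hout _ (by decide) (by decide)) ?_
      (Result_flipConj autLamp (Result.lamp isoLamp))
    intro s x
    rcases fin2cases s with rfl | rfl <;> cases x
    · rw [e1]; decide
    · rw [e2]; decide
    · rw [e3]; decide
    · rw [e4]; decide
  · -- (1,0,1,1) : ℤ, autAdding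
    refine Result_of_eq (B := autAdding) (hout _ (by decide) (by decide)) ?_
      (Result.int isoAdding)
    intro s x
    rcases fin2cases s with rfl | rfl <;> cases x
    · rw [e1]; decide
    · rw [e2]; decide
    · rw [e3]; decide
    · rw [e4]; decide
  · -- (1,1,0,0) : Klein, autK2
    refine Result_of_eq (B := autK2) (hout _ (by decide) (by decide)) ?_ (Result.klein isoK2)
    intro s x
    rcases fin2cases s with rfl | rfl <;> cases x
    · rw [e1]; decide
    · rw [e2]; decide
    · rw [e3]; decide
    · rw [e4]; decide
  · -- (1,1,0,1) : D∞, autD2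
    refine Result_of_eq (B := autD2) (hout _ (by decide) (by decide)) ?_ (Result.dinf isoD2)
    intro s x
    rcases fin2cases s with rfl | rfl <;> cases x
    · rw [e1]; decide
    · rw [e2]; decide
    · rw [e3]; decide
    · rw [e4]; decide
  · -- (1,1,1,0) : D∞, flipConj autD2
    refine Result_of_eq (B := autD2.flipConj) (hout _ (by decide) (by decide)) ?_
      (Result_flipConj autD2 (Result.dinf isoD2))
    intro s x
    rcases fin2cases s with rfl | rfl <;> cases x
    · rw [e1]; decide
    · rw [e2]; decide
    · rw [e3]; decide
    · rw [e4]; decide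
  · -- (1,1,1,1) : C2, autC2b
    refine Result_of_eq (B := autC2b) (hout _ (by decide) (by decide)) ?_ (Result.c2 isoC2b)
    intro s x
    rcases fin2cases s with rfl | rfl <;> cases x
    · rw [e1]; decide
    · rw [e2]; decide
    · rw [e3]; decide
    · rw [e4]; decide

theorem classifyFin2 (A : BinAutomaton (Fin 2)) : Result A.autGroup := by
  have hperm : ∀ π : Equiv.Perm Bool, π = 1 ∨ π = flipPerm := by decide
  rcases hperm (A.out 0) with p0 | p0 <;> rcases hperm (A.out 1) with p1 | p1
  · exact Result.unit (iso_of_all_out_one A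
      (fun s => by rcases fin2cases s with rfl | rfl; exacts [p0, p1]))
  · -- out 0 trivial, out 1 = σ : swap the states
    have hm := classifyMixed (A.relabel (Equiv.swap 0 1)) ?_ ?_
    · exact Result_congr (A.autGroup_relabel (Equiv.swap 0 1)) hm
    · rw [BinAutomaton.relabel_out, Equiv.symm_swap, Equiv.swap_apply_left, p1]
    · rw [BinAutomaton.relabel_out, Equiv.symm_swap, Equiv.swap_apply_right, p0]
  · exact classifyMixed A p0 p1
  · exact Result.c2 (iso_of_all_out_flip A
      (fun s => by rcases fin2cases s with rfl | rfl; exacts [p0, p1]))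

end Assembly


/-- Up to isomorphism there are exactly six groups generated by
invertible automata with 2 states over `X = {0,1}`: the trivial group, `C₂`, the Klein
group `C₂ × C₂`, the infinite cyclic group `ℤ`, the infinite dihedral group `D_∞`
(`DihedralGroup 0`), and the lamplighter group `ℤ ≀ C₂`.  Every 2-state automaton group
is isomorphic to one of these six, each of the six occurs, and in particular the adding
machine automaton generates `ℤ`, the automaton `a = σ(a,a)`, `b = (a,b)` generates
`D_∞`, and the automaton `a = σ(a,b)`, `b = (a,b)` generates the lamplighter group. -/
theorem two_state_automaton_groups :
    (∀ (S : Type), Nonempty (S ≃ Fin 2) → ∀ A : BinAutomaton S,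
      Nonempty (A.autGroup ≃* Unit) ∨
      Nonempty (A.autGroup ≃* Multiplicative (ZMod 2)) ∨
      Nonempty (A.autGroup ≃* Multiplicative (ZMod 2 × ZMod 2)) ∨
      Nonempty (A.autGroup ≃* Multiplicative ℤ) ∨
      Nonempty (A.autGroup ≃* DihedralGroup 0) ∨
      Nonempty (A.autGroup ≃* Lamplighter)) ∧
    (∃ A : BinAutomaton (Fin 2), Nonempty (A.autGroup ≃* Unit)) ∧
    (∃ A : BinAutomaton (Fin 2), Nonempty (A.autGroup ≃* Multiplicative (ZMod 2))) ∧
    (∃ A : BinAutomaton (Fin 2),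
      Nonempty (A.autGroup ≃* Multiplicative (ZMod 2 × ZMod 2))) ∧
    Nonempty (autAdding.autGroup ≃* Multiplicative ℤ) ∧
    Nonempty (autDInf.autGroup ≃* DihedralGroup 0) ∧
    Nonempty (autLamp.autGroup ≃* Lamplighter) := by
  refine ⟨?_, ?_, ?_, ?_, isoAdding, isoDInf, isoLamp⟩
  · intro S hS A
    obtain ⟨e⟩ := hS
    exact Result_congr (A.autGroup_relabel e) (classifyFin2 (A.relabel e))
  · exact ⟨⟨![1, 1], ![fun _ => 0, fun _ => 0]⟩,
      iso_of_all_out_one _ (fun s => by rcases fin2cases s with rfl | rfl <;> rfl)⟩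
  · exact ⟨autC2a, isoC2a⟩
  · exact ⟨autK1, isoK1⟩
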